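/- arXiv:2412.20778 — 2 statements merged into one kernel-verified Lean document; each statement's English description precedes it below -/
import Mathlib

section
/- Let u be a classical solution of the forward problem, and write ‖F‖² := ∫₀^T ∫₀^ℓ F(x,t)² dx dt and C₁² := (5ℓρ₀/3)(C_e² − 1) with C_e² := exp(T/ρ₀). Then the boundary slope trace estimates of Corollary 1 hold: ∫₀^T (∂ₓu(0,t))² dt ≤ (C₁²/r₀) ‖F‖² and ∫₀^T (∂ₓu(ℓ,t))² dt ≤ (C₁²/r₀) ‖F‖². -/
open Set

open Set MeasureTheory intervalIntegral

section TraceAux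

variable {a b c d : ℝ}

lemma sliceX {w : ℝ → ℝ → ℝ} {t : ℝ}
    (h : ContinuousOn (fun p : ℝ × ℝ => w p.1 p.2) (Icc a b ×ˢ Icc c d))
    (ht : t ∈ Icc c d) : ContinuousOn (fun x => w x t) (Icc a b) :=
  h.comp (continuous_id.prodMk continuous_const).continuousOn fun x hx => ⟨hx, ht⟩

lemma sliceT {w : ℝ → ℝ → ℝ} {x : ℝ}
    (h : ContinuousOn (fun p : ℝ × ℝ => w p.1 p.2) (Icc a b ×ˢ Icc c d))
    (hx : x ∈ Icc a b) : ContinuousOn (fun t => w x t) (Icc c d) :=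
  h.comp (continuous_const.prodMk continuous_id).continuousOn fun t ht => ⟨hx, ht⟩

lemma sliceXp {f : ℝ × ℝ → ℝ} {t : ℝ}
    (h : ContinuousOn f (Icc a b ×ˢ Icc c d))
    (ht : t ∈ Icc c d) : ContinuousOn (fun x => f (x, t)) (Icc a b) :=
  h.comp (continuous_id.prodMk continuous_const).continuousOn fun x hx => ⟨hx, ht⟩

lemma liftX {w : ℝ → ℝ} (h : ContinuousOn w (Icc a b)) :
    ContinuousOn (fun p : ℝ × ℝ => w p.1) (Icc a b ×ˢ Icc c d) :=
  h.comp continuous_fst.continuousOn fun p hp => hp.1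

/-- Cauchy–Schwarz for interval integrals of continuous functions. -/
lemma sq_integral_mul_le (hab : a ≤ b) {f g : ℝ → ℝ}
    (hf : ContinuousOn f (Icc a b)) (hg : ContinuousOn g (Icc a b)) :
    (∫ x in a..b, f x * g x) ^ 2 ≤ (∫ x in a..b, f x ^ 2) * (∫ x in a..b, g x ^ 2) := by
  have hu : uIcc a b = Icc a b := uIcc_of_le hab
  have hif2 : IntervalIntegrable (fun x => f x ^ 2) volume a b :=
    (hu ▸ (hf.pow 2)).intervalIntegrable
  have hig2 : IntervalIntegrable (fun x => g x ^ 2) volume a b :=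
    (hu ▸ (hg.pow 2)).intervalIntegrable
  have hifg : IntervalIntegrable (fun x => f x * g x) volume a b :=
    (hu ▸ (hf.mul hg)).intervalIntegrable
  set A := ∫ x in a..b, f x ^ 2 with hA
  set B := ∫ x in a..b, g x ^ 2 with hB
  set C := ∫ x in a..b, f x * g x with hC
  have hA0 : 0 ≤ A := integral_nonneg hab fun x _ => sq_nonneg _
  have hB0 : 0 ≤ B := integral_nonneg hab fun x _ => sq_nonneg _
  rcases eq_or_lt_of_le hA0 with h | hApos
  · have hf2int : IntegrableOn (fun x => f x ^ 2) (Ioc a b) volume := by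
      simpa [intervalIntegrable_iff_integrableOn_Ioc_of_le hab] using hif2
    have hzero : (fun x => f x ^ 2) =ᵐ[volume.restrict (Ioc a b)] 0 := by
      rw [← MeasureTheory.integral_eq_zero_iff_of_nonneg
        (fun x => sq_nonneg (f x)) hf2int]
      rw [hA, integral_of_le hab] at h
      exact h.symm
    have hCz : C = 0 := by
      rw [hC, integral_of_le hab]
      have : (fun x => f x * g x) =ᵐ[volume.restrict (Ioc a b)] 0 := by
        filter_upwards [hzero] with x hx
        have hfx : f x = 0 := by
          simp only [Pi.zero_apply] at hx
          nlinarith [sq_nonneg (f x)]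
        simp [hfx]
      rw [MeasureTheory.integral_congr_ae this]
      simp
    simp [hCz, ← h, mul_comm]
  · have key : 0 ≤ ∫ x in a..b, (C * f x - A * g x) ^ 2 :=
      integral_nonneg hab fun x _ => sq_nonneg _
    have expand : (∫ x in a..b, (C * f x - A * g x) ^ 2)
        = C ^ 2 * A - 2 * C * A * C + A ^ 2 * B := by
      have hfun : (fun x => (C * f x - A * g x) ^ 2)
          = fun x => C ^ 2 * f x ^ 2 - 2 * C * A * (f x * g x) + A ^ 2 * g x ^ 2 := by
        funext x; ring
      rw [hfun]
      rw [intervalIntegral.integral_add (((hif2.const_mul _).sub (hifg.const_mul _)))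
        (hig2.const_mul _),
        intervalIntegral.integral_sub (hif2.const_mul _) (hifg.const_mul _),
        intervalIntegral.integral_const_mul, intervalIntegral.integral_const_mul,
        intervalIntegral.integral_const_mul]
    nlinarith [key, expand, hApos]

/-- Continuity of a parametric interval integral with jointly continuous integrand. -/
lemma contOn_param (hab : a ≤ b) {f : ℝ → ℝ → ℝ}
    (hf : ContinuousOn (fun p : ℝ × ℝ => f p.1 p.2) (Icc a b ×ˢ Icc c d)) :
    ContinuousOn (fun t => ∫ x in a..b, f x t) (Icc c d) := by
  have hrw : (fun t => ∫ x in a..b, f x t) = fun t => ∫ x in Ioc a b, f x t :=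
    funext fun t => integral_of_le hab
  rw [hrw]
  obtain ⟨M, hM⟩ := ((isCompact_Icc.prod isCompact_Icc).exists_bound_of_continuousOn hf)
  apply MeasureTheory.continuousOn_of_dominated
    (bound := fun _ => M) (μ := volume.restrict (Ioc a b))
  · intro t ht
    exact ((sliceX hf ht).mono Ioc_subset_Icc_self).aestronglyMeasurable measurableSet_Ioc
  · intro t ht
    filter_upwards [ae_restrict_mem measurableSet_Ioc] with x hx
    exact hM (x, t) ⟨Ioc_subset_Icc_self hx, ht⟩
  · exact integrableOn_const measure_Ioc_lt_top.ne
  · filter_upwards [ae_restrict_mem measurableSet_Ioc] with x hx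
    exact sliceT hf (Ioc_subset_Icc_self hx)

/-- Differentiation under the integral sign at an interior parameter value. -/
lemma hasDerivAt_param (hab : a ≤ b) {f f' : ℝ → ℝ → ℝ} {t₀ : ℝ}
    (ht₀ : t₀ ∈ Ioo c d)
    (hf : ContinuousOn (fun p : ℝ × ℝ => f p.1 p.2) (Icc a b ×ˢ Icc c d))
    (hf' : ContinuousOn (fun p : ℝ × ℝ => f' p.1 p.2) (Icc a b ×ˢ Icc c d))
    (hd : ∀ x ∈ Icc a b, ∀ t ∈ Icc c d, HasDerivAt (fun s => f x s) (f' x t) t) :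
    HasDerivAt (fun t => ∫ x in a..b, f x t) (∫ x in a..b, f' x t₀) t₀ := by
  set ε := min (t₀ - c) (d - t₀) with hε
  have hεpos : 0 < ε := lt_min (by linarith [ht₀.1]) (by linarith [ht₀.2])
  have hball : Metric.ball t₀ ε ⊆ Icc c d := by
    intro s hs
    rw [Metric.mem_ball, Real.dist_eq, abs_lt] at hs
    constructor
    · have h1 : ε ≤ t₀ - c := min_le_left _ _; linarith [hs.1]
    · have h1 : ε ≤ d - t₀ := min_le_right _ _; linarith [hs.2]
  have huIoc : uIoc a b = Ioc a b := uIoc_of_le hab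
  obtain ⟨M, hM⟩ := ((isCompact_Icc.prod isCompact_Icc).exists_bound_of_continuousOn hf')
  refine (intervalIntegral.hasDerivAt_integral_of_dominated_loc_of_deriv_le (Metric.ball_mem_nhds t₀ hεpos)
    (F := fun t x => f x t) (F' := fun t x => f' x t) (bound := fun _ => M)
    ?_ ?_ ?_ ?_ ?_ ?_).2
  · filter_upwards [Ioo_mem_nhds ht₀.1 ht₀.2] with t ht
    rw [huIoc]
    exact ((sliceX hf (Ioo_subset_Icc_self ht)).mono
      Ioc_subset_Icc_self).aestronglyMeasurable measurableSet_Ioc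
  · exact (uIcc_of_le hab ▸ sliceX hf (Ioo_subset_Icc_self ht₀)).intervalIntegrable
  · rw [huIoc]
    exact ((sliceX hf' (Ioo_subset_Icc_self ht₀)).mono
      Ioc_subset_Icc_self).aestronglyMeasurable measurableSet_Ioc
  · refine Filter.Eventually.of_forall fun x hx t ht => ?_
    rw [huIoc] at hx
    exact hM (x, t) ⟨Ioc_subset_Icc_self hx, hball ht⟩
  · exact intervalIntegrable_const
  · refine Filter.Eventually.of_forall fun x hx t ht => ?_
    rw [huIoc] at hx
    exact hd x (Ioc_subset_Icc_self hx) t (hball ht)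

/-- Equality of mixed partial derivatives. -/
lemma mixed_partial {ℓ T : ℝ} {v vx vt vxt : ℝ → ℝ → ℝ}
    (hvx : ∀ x ∈ Icc (0:ℝ) ℓ, ∀ t ∈ Icc (0:ℝ) T, HasDerivAt (fun y => v y t) (vx x t) x)
    (hvt : ∀ x ∈ Icc (0:ℝ) ℓ, ∀ t ∈ Icc (0:ℝ) T, HasDerivAt (fun s => v x s) (vt x t) t)
    (hvxt : ∀ x ∈ Icc (0:ℝ) ℓ, ∀ t ∈ Icc (0:ℝ) T, HasDerivAt (fun s => vx x s) (vxt x t) t)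
    (cont_vx : ContinuousOn (fun p : ℝ × ℝ => vx p.1 p.2) (Icc 0 ℓ ×ˢ Icc 0 T))
    (cont_vxt : ContinuousOn (fun p : ℝ × ℝ => vxt p.1 p.2) (Icc 0 ℓ ×ˢ Icc 0 T)) :
    ∀ x ∈ Ioo (0:ℝ) ℓ, ∀ t ∈ Ioo (0:ℝ) T, HasDerivAt (fun y => vt y t) (vxt x t) x := by
  intro x hx t ht
  have hℓ : (0:ℝ) < ℓ := hx.1.trans hx.2
  have step1 : ∀ y ∈ Icc (0:ℝ) ℓ, ∀ τ ∈ Icc (0:ℝ) T,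
      v y τ - v 0 τ = ∫ s in (0:ℝ)..y, vx s τ := by
    intro y hy τ hτ
    have hsub : uIcc (0:ℝ) y ⊆ Icc 0 ℓ := by
      rw [uIcc_of_le hy.1]; exact Icc_subset_Icc le_rfl hy.2
    have : ∫ s in (0:ℝ)..y, vx s τ = v y τ - v 0 τ := by
      apply intervalIntegral.integral_eq_sub_of_hasDerivAt
        (fun s hs => hvx s (hsub hs) τ hτ)
      exact (((sliceX cont_vx hτ).mono hsub).intervalIntegrable)
    linarith [this]
  have step2 : ∀ y ∈ Icc (0:ℝ) ℓ, vt y t - vt 0 t = ∫ s in (0:ℝ)..y, vxt s t := by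
    intro y hy
    have hrect : Icc (0:ℝ) y ×ˢ Icc (0:ℝ) T ⊆ Icc 0 ℓ ×ˢ Icc 0 T :=
      prod_mono (Icc_subset_Icc le_rfl hy.2) le_rfl
    have hψ : HasDerivAt (fun τ => ∫ s in (0:ℝ)..y, vx s τ)
        (∫ s in (0:ℝ)..y, vxt s t) t :=
      hasDerivAt_param hy.1 ht (cont_vx.mono hrect) (cont_vxt.mono hrect)
        (fun s hs τ hτ => hvxt s (Icc_subset_Icc le_rfl hy.2 hs) τ hτ)
    have hφ : HasDerivAt (fun τ => v y τ - v 0 τ) (vt y t - vt 0 t) t :=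
      (hvt y hy t (Ioo_subset_Icc_self ht)).sub
        (hvt 0 (left_mem_Icc.2 hℓ.le) t (Ioo_subset_Icc_self ht))
    have heq : (fun τ => v y τ - v 0 τ) =ᶠ[nhds t] fun τ => ∫ s in (0:ℝ)..y, vx s τ := by
      filter_upwards [Ioo_mem_nhds ht.1 ht.2] with τ hτ
      exact step1 y hy τ (Ioo_subset_Icc_self hτ)
    exact (hφ.congr_of_eventuallyEq heq.symm).unique hψ
  have hcont : ContinuousOn (fun s => vxt s t) (Icc 0 ℓ) :=
    sliceX cont_vxt (Ioo_subset_Icc_self ht)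
  have hprim : HasDerivAt (fun y => ∫ s in (0:ℝ)..y, vxt s t) (vxt x t) x := by
    apply intervalIntegral.integral_hasDerivAt_right
    · have hsub : uIcc (0:ℝ) x ⊆ Icc 0 ℓ := by
        rw [uIcc_of_le hx.1.le]; exact Icc_subset_Icc le_rfl hx.2.le
      exact ((hcont.mono hsub).intervalIntegrable)
    · exact ⟨Ioo 0 ℓ, Ioo_mem_nhds hx.1 hx.2,
        (hcont.mono Ioo_subset_Icc_self).aestronglyMeasurable measurableSet_Ioo⟩
    · exact hcont.continuousAt (Icc_mem_nhds hx.1 hx.2)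
  have heq : (fun y => vt y t) =ᶠ[nhds x] fun y => vt 0 t + ∫ s in (0:ℝ)..y, vxt s t := by
    filter_upwards [Ioo_mem_nhds hx.1 hx.2] with y hy
    have := step2 y (Ioo_subset_Icc_self hy)
    linarith
  exact ((hprim.const_add (vt 0 t)).congr_of_eventuallyEq heq)

end TraceAux


/-- A classical solution of the forward problem for the damped Euler–Bernoulli beam
equation `ρ_A(x) uₜₜ + μ(x) uₜ − (T_r(x) uₓ)ₓ + (r(x) uₓₓ + κ(x) uₓₓₜ)ₓₓ = F(x,t)` on
`(0,ℓ) × (0,T)`, with homogeneous initial conditions and simply supported boundary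
conditions.  The fields `ux, uxx, ut, utt, uxt, uxxt` are the partial derivatives of
`u`, `Ax` is the spatial derivative of `T_r(x) uₓ`, and `Bx, Bxx` are the first and
second spatial derivatives of the bending moment `B(x,t) = r(x) uₓₓ + κ(x) uₓₓₜ`. -/
structure ForwardSol (ℓ T : ℝ) (ρA μ Tr r κ : ℝ → ℝ) (F : ℝ → ℝ → ℝ) where
  u : ℝ → ℝ → ℝ
  ux : ℝ → ℝ → ℝ
  uxx : ℝ → ℝ → ℝ
  ut : ℝ → ℝ → ℝ
  utt : ℝ → ℝ → ℝ
  uxt : ℝ → ℝ → ℝ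
  uxxt : ℝ → ℝ → ℝ
  Ax : ℝ → ℝ → ℝ
  Bx : ℝ → ℝ → ℝ
  Bxx : ℝ → ℝ → ℝ
  smooth : ContDiffOn ℝ (⊤ : ℕ∞) (fun p : ℝ × ℝ => u p.1 p.2) (Icc 0 ℓ ×ˢ Icc 0 T)
  hux : ∀ x ∈ Icc (0:ℝ) ℓ, ∀ t ∈ Icc (0:ℝ) T, HasDerivAt (fun y => u y t) (ux x t) x
  huxx : ∀ x ∈ Icc (0:ℝ) ℓ, ∀ t ∈ Icc (0:ℝ) T, HasDerivAt (fun y => ux y t) (uxx x t) x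
  hut : ∀ x ∈ Icc (0:ℝ) ℓ, ∀ t ∈ Icc (0:ℝ) T, HasDerivAt (fun s => u x s) (ut x t) t
  hutt : ∀ x ∈ Icc (0:ℝ) ℓ, ∀ t ∈ Icc (0:ℝ) T, HasDerivAt (fun s => ut x s) (utt x t) t
  huxt : ∀ x ∈ Icc (0:ℝ) ℓ, ∀ t ∈ Icc (0:ℝ) T, HasDerivAt (fun s => ux x s) (uxt x t) t
  huxxt : ∀ x ∈ Icc (0:ℝ) ℓ, ∀ t ∈ Icc (0:ℝ) T, HasDerivAt (fun s => uxx x s) (uxxt x t) t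
  hAx : ∀ x ∈ Icc (0:ℝ) ℓ, ∀ t ∈ Icc (0:ℝ) T,
    HasDerivAt (fun y => Tr y * ux y t) (Ax x t) x
  hBx : ∀ x ∈ Icc (0:ℝ) ℓ, ∀ t ∈ Icc (0:ℝ) T,
    HasDerivAt (fun y => r y * uxx y t + κ y * uxxt y t) (Bx x t) x
  hBxx : ∀ x ∈ Icc (0:ℝ) ℓ, ∀ t ∈ Icc (0:ℝ) T, HasDerivAt (fun y => Bx y t) (Bxx x t) x
  cont_ux : ContinuousOn (fun p : ℝ × ℝ => ux p.1 p.2) (Icc 0 ℓ ×ˢ Icc 0 T)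
  cont_uxx : ContinuousOn (fun p : ℝ × ℝ => uxx p.1 p.2) (Icc 0 ℓ ×ˢ Icc 0 T)
  cont_ut : ContinuousOn (fun p : ℝ × ℝ => ut p.1 p.2) (Icc 0 ℓ ×ˢ Icc 0 T)
  cont_utt : ContinuousOn (fun p : ℝ × ℝ => utt p.1 p.2) (Icc 0 ℓ ×ˢ Icc 0 T)
  cont_uxt : ContinuousOn (fun p : ℝ × ℝ => uxt p.1 p.2) (Icc 0 ℓ ×ˢ Icc 0 T)
  cont_uxxt : ContinuousOn (fun p : ℝ × ℝ => uxxt p.1 p.2) (Icc 0 ℓ ×ˢ Icc 0 T)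
  cont_Ax : ContinuousOn (fun p : ℝ × ℝ => Ax p.1 p.2) (Icc 0 ℓ ×ˢ Icc 0 T)
  cont_Bx : ContinuousOn (fun p : ℝ × ℝ => Bx p.1 p.2) (Icc 0 ℓ ×ˢ Icc 0 T)
  cont_Bxx : ContinuousOn (fun p : ℝ × ℝ => Bxx p.1 p.2) (Icc 0 ℓ ×ˢ Icc 0 T)
  pde : ∀ x ∈ Ioo (0:ℝ) ℓ, ∀ t ∈ Ioo (0:ℝ) T,
    ρA x * utt x t + μ x * ut x t - Ax x t + Bxx x t = F x t
  init_u : ∀ x ∈ Ioo (0:ℝ) ℓ, u x 0 = 0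
  init_ut : ∀ x ∈ Ioo (0:ℝ) ℓ, ut x 0 = 0
  bc_u0 : ∀ t ∈ Icc (0:ℝ) T, u 0 t = 0
  bc_ul : ∀ t ∈ Icc (0:ℝ) T, u ℓ t = 0
  bc_m0 : ∀ t ∈ Icc (0:ℝ) T, r 0 * uxx 0 t + κ 0 * uxxt 0 t = 0
  bc_ml : ∀ t ∈ Icc (0:ℝ) T, r ℓ * uxx ℓ t + κ ℓ * uxxt ℓ t = 0

set_option maxHeartbeats 1600000

/-- **Boundary slope trace estimates of Corollary 1**, with
`C₁² = (5ℓρ₀/3)(C_e² − 1)` and `C_e² = exp(T/ρ₀)`. -/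
theorem boundary_slope_trace_estimate
    (ℓ T ρ₀ r₀ κ₀ : ℝ) (hℓ : 0 < ℓ) (hT : 0 < T)
    (hρ₀ : 0 < ρ₀) (hr₀ : 0 < r₀) (hκ₀ : 0 < κ₀)
    (ρA μ Tr r κ : ℝ → ℝ) (F : ℝ → ℝ → ℝ)
    (hρA : ContDiffOn ℝ (⊤ : ℕ∞) ρA (Icc 0 ℓ))
    (hμ : ContDiffOn ℝ (⊤ : ℕ∞) μ (Icc 0 ℓ))
    (hTr : ContDiffOn ℝ (⊤ : ℕ∞) Tr (Icc 0 ℓ))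
    (hr : ContDiffOn ℝ (⊤ : ℕ∞) r (Icc 0 ℓ))
    (hκ : ContDiffOn ℝ (⊤ : ℕ∞) κ (Icc 0 ℓ))
    (hρAb : ∀ x ∈ Icc (0:ℝ) ℓ, ρ₀ ≤ ρA x)
    (hμb : ∀ x ∈ Icc (0:ℝ) ℓ, 0 ≤ μ x)
    (hTrb : ∀ x ∈ Icc (0:ℝ) ℓ, 0 ≤ Tr x)
    (hrb : ∀ x ∈ Icc (0:ℝ) ℓ, r₀ ≤ r x)
    (hκb : ∀ x ∈ Icc (0:ℝ) ℓ, κ₀ ≤ κ x)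
    (hF : ContinuousOn (fun p : ℝ × ℝ => F p.1 p.2) (Icc 0 ℓ ×ˢ Icc 0 T))
    (sol : ForwardSol ℓ T ρA μ Tr r κ F) :
    (∫ t in (0:ℝ)..T, (sol.ux 0 t) ^ 2)
      ≤ (5 * ℓ * ρ₀ / 3) * (Real.exp (T / ρ₀) - 1) / r₀ * (∫ t in (0:ℝ)..T, ∫ x in (0:ℝ)..ℓ, (F x t) ^ 2) ∧
    (∫ t in (0:ℝ)..T, (sol.ux ℓ t) ^ 2)
      ≤ (5 * ℓ * ρ₀ / 3) * (Real.exp (T / ρ₀) - 1) / r₀ * (∫ t in (0:ℝ)..T, ∫ x in (0:ℝ)..ℓ, (F x t) ^ 2) := by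
  obtain ⟨u, ux, uxx, ut, utt, uxt, uxxt, Ax, Bx, Bxx, _smooth, hux, huxx, hut, hutt,
    huxt, huxxt, hAx, hBx, hBxx, cont_ux, cont_uxx, cont_ut, cont_utt, cont_uxt,
    cont_uxxt, cont_Ax, cont_Bx, cont_Bxx, pde, init_u, init_ut, bc_u0, bc_ul,
    bc_m0, bc_ml⟩ := sol
  simp only []
  have hl : (0:ℝ) ≤ ℓ := hℓ.le
  have hT0 : (0:ℝ) ≤ T := hT.le
  have hu0m : (0:ℝ) ∈ Icc (0:ℝ) ℓ := left_mem_Icc.2 hl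
  have hulm : ℓ ∈ Icc (0:ℝ) ℓ := right_mem_Icc.2 hl
  have huIl : uIcc (0:ℝ) ℓ = Icc 0 ℓ := uIcc_of_le hl
  have huIT : uIcc (0:ℝ) T = Icc 0 T := uIcc_of_le hT0
  -- mixed partial derivatives
  have hmix1 : ∀ x ∈ Ioo (0:ℝ) ℓ, ∀ t ∈ Ioo (0:ℝ) T,
      HasDerivAt (fun y => ut y t) (uxt x t) x :=
    mixed_partial hux hut huxt cont_ux cont_uxt
  have hmix2 : ∀ x ∈ Ioo (0:ℝ) ℓ, ∀ t ∈ Ioo (0:ℝ) T,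
      HasDerivAt (fun y => uxt y t) (uxxt x t) x :=
    mixed_partial huxx huxt huxxt cont_uxx cont_uxxt
  -- boundary values of ut
  have hut0 : ∀ t ∈ Ioo (0:ℝ) T, ut 0 t = 0 := by
    intro t ht
    have hder := hut 0 hu0m t (Ioo_subset_Icc_self ht)
    have hev : (fun _ : ℝ => (0:ℝ)) =ᶠ[nhds t] fun s => u 0 s := by
      filter_upwards [Icc_mem_nhds ht.1 ht.2] with s hs
      exact (bc_u0 s hs).symm
    exact (hder.congr_of_eventuallyEq hev).unique (hasDerivAt_const t 0)
  have hutl : ∀ t ∈ Ioo (0:ℝ) T, ut ℓ t = 0 := by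
    intro t ht
    have hder := hut ℓ hulm t (Ioo_subset_Icc_self ht)
    have hev : (fun _ : ℝ => (0:ℝ)) =ᶠ[nhds t] fun s => u ℓ s := by
      filter_upwards [Icc_mem_nhds ht.1 ht.2] with s hs
      exact (bc_ul s hs).symm
    exact (hder.congr_of_eventuallyEq hev).unique (hasDerivAt_const t 0)
  ----------------------------------------------------------------
  -- TRACE INEQUALITIES
  ----------------------------------------------------------------
  have hpoly : ∫ s in (0:ℝ)..ℓ, (ℓ - s) ^ 2 = ℓ ^ 3 / 3 := by
    rw [intervalIntegral.integral_comp_sub_left (fun z : ℝ => z ^ 2) ℓ]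
    simp [integral_pow]
    norm_num
  have hpoly2 : ∫ s in (0:ℝ)..ℓ, s ^ 2 = ℓ ^ 3 / 3 := by
    simp [integral_pow]
    norm_num
  have htrace : ∀ t ∈ Icc (0:ℝ) T,
      ux 0 t ^ 2 ≤ ℓ / 3 * ∫ x in (0:ℝ)..ℓ, uxx x t ^ 2 ∧
      ux ℓ t ^ 2 ≤ ℓ / 3 * ∫ x in (0:ℝ)..ℓ, uxx x t ^ 2 := by
    intro t ht
    have hcux : ContinuousOn (fun x => ux x t) (Icc 0 ℓ) := sliceX cont_ux ht
    have hcuxx : ContinuousOn (fun x => uxx x t) (Icc 0 ℓ) := sliceX cont_uxx ht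
    have hJ0 : (0:ℝ) ≤ ∫ x in (0:ℝ)..ℓ, uxx x t ^ 2 :=
      integral_nonneg hl fun x _ => sq_nonneg _
    have hint1 : ∫ s in (0:ℝ)..ℓ, (ℓ - s) * uxx s t = -(ℓ * ux 0 t) := by
      have hG : ∀ y ∈ uIcc (0:ℝ) ℓ,
          HasDerivAt (fun y => (ℓ - y) * ux y t + u y t) ((ℓ - y) * uxx y t) y := by
        intro y hy
        rw [huIl] at hy
        have h1 := ((hasDerivAt_const y ℓ).sub (hasDerivAt_id' (x := y))).mul
          (huxx y hy t ht)
        have h2 := hux y hy t ht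
        exact (h1.add h2).congr_deriv (by simp only [Pi.sub_apply]; ring)
      have hint : IntervalIntegrable (fun s => (ℓ - s) * uxx s t) volume 0 ℓ := by
        apply ContinuousOn.intervalIntegrable
        rw [huIl]
        exact (continuous_const.sub continuous_id).continuousOn.mul hcuxx
      rw [intervalIntegral.integral_eq_sub_of_hasDerivAt hG hint,
        bc_ul t ht, bc_u0 t ht]
      ring
    have hint2 : ∫ s in (0:ℝ)..ℓ, s * uxx s t = ℓ * ux ℓ t := by
      have hG : ∀ y ∈ uIcc (0:ℝ) ℓ,
          HasDerivAt (fun y => y * ux y t - u y t) (y * uxx y t) y := by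
        intro y hy
        rw [huIl] at hy
        have h1 := (hasDerivAt_id' (x := y)).mul (huxx y hy t ht)
        have h2 := hux y hy t ht
        exact (h1.sub h2).congr_deriv (by ring)
      have hint : IntervalIntegrable (fun s => s * uxx s t) volume 0 ℓ := by
        apply ContinuousOn.intervalIntegrable
        rw [huIl]
        exact continuous_id.continuousOn.mul hcuxx
      rw [intervalIntegral.integral_eq_sub_of_hasDerivAt hG hint,
        bc_ul t ht, bc_u0 t ht]
      ring
    have hf1 : ContinuousOn (fun s : ℝ => ℓ - s) (Icc 0 ℓ) :=
      (continuous_const.sub continuous_id').continuousOn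
    have hf2 : ContinuousOn (fun s : ℝ => s) (Icc 0 ℓ) := continuous_id'.continuousOn
    constructor
    · have hCS := sq_integral_mul_le hl hf1 hcuxx
      rw [hint1, hpoly] at hCS
      nlinarith [hCS, mul_pos hℓ hℓ, hJ0, sq_nonneg (ux 0 t)]
    · have hCS := sq_integral_mul_le hl hf2 hcuxx
      rw [hint2, hpoly2] at hCS
      nlinarith [hCS, mul_pos hℓ hℓ, hJ0, sq_nonneg (ux ℓ t)]
  ----------------------------------------------------------------
  -- ENERGY ESTIMATE
  ----------------------------------------------------------------
  have jρA : ContinuousOn (fun pt : ℝ × ℝ => ρA pt.1) (Icc 0 ℓ ×ˢ Icc 0 T) :=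
    liftX hρA.continuousOn
  have jμ : ContinuousOn (fun pt : ℝ × ℝ => μ pt.1) (Icc 0 ℓ ×ˢ Icc 0 T) :=
    liftX hμ.continuousOn
  have jTr : ContinuousOn (fun pt : ℝ × ℝ => Tr pt.1) (Icc 0 ℓ ×ˢ Icc 0 T) :=
    liftX hTr.continuousOn
  have jr : ContinuousOn (fun pt : ℝ × ℝ => r pt.1) (Icc 0 ℓ ×ˢ Icc 0 T) :=
    liftX hr.continuousOn
  have jκ : ContinuousOn (fun pt : ℝ × ℝ => κ pt.1) (Icc 0 ℓ ×ˢ Icc 0 T) :=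
    liftX hκ.continuousOn
  have cont_e : ContinuousOn (fun pt : ℝ × ℝ =>
      ρA pt.1 * ut pt.1 pt.2 ^ 2 + Tr pt.1 * ux pt.1 pt.2 ^ 2 + r pt.1 * uxx pt.1 pt.2 ^ 2)
      (Icc 0 ℓ ×ˢ Icc 0 T) :=
    ((jρA.mul (cont_ut.pow 2)).add (jTr.mul (cont_ux.pow 2))).add (jr.mul (cont_uxx.pow 2))
  have cont_p : ContinuousOn (fun pt : ℝ × ℝ =>
      ρA pt.1 * (2 * ut pt.1 pt.2 * utt pt.1 pt.2) + Tr pt.1 * (2 * ux pt.1 pt.2 * uxt pt.1 pt.2)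
        + r pt.1 * (2 * uxx pt.1 pt.2 * uxxt pt.1 pt.2)) (Icc 0 ℓ ×ˢ Icc 0 T) :=
    ((jρA.mul ((continuousOn_const.mul cont_ut).mul cont_utt)).add
      (jTr.mul ((continuousOn_const.mul cont_ux).mul cont_uxt))).add
      (jr.mul ((continuousOn_const.mul cont_uxx).mul cont_uxxt))
  have cont_q : ContinuousOn (fun pt : ℝ × ℝ =>
      2 * ut pt.1 pt.2 * F pt.1 pt.2 - 2 * μ pt.1 * ut pt.1 pt.2 ^ 2
        - 2 * κ pt.1 * uxxt pt.1 pt.2 ^ 2) (Icc 0 ℓ ×ˢ Icc 0 T) :=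
    (((continuousOn_const.mul cont_ut).mul hF).sub
      ((continuousOn_const.mul jμ).mul (cont_ut.pow 2))).sub
      ((continuousOn_const.mul jκ).mul (cont_uxxt.pow 2))
  have hEcont : ContinuousOn (fun t => ∫ x in (0:ℝ)..ℓ,
      (ρA x * ut x t ^ 2 + Tr x * ux x t ^ 2 + r x * uxx x t ^ 2)) (Icc 0 T) :=
    contOn_param hl cont_e
  have hgcont : ContinuousOn (fun t => ∫ x in (0:ℝ)..ℓ, F x t ^ 2) (Icc 0 T) :=
    contOn_param hl (hF.pow 2)
  have hg0 : ∀ t : ℝ, 0 ≤ ∫ x in (0:ℝ)..ℓ, F x t ^ 2 :=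
    fun t => integral_nonneg hl fun x _ => sq_nonneg _
  have hG0 : 0 ≤ ∫ t in (0:ℝ)..T, ∫ x in (0:ℝ)..ℓ, F x t ^ 2 :=
    integral_nonneg hT0 fun t _ => hg0 t
  have hEderiv : ∀ t₀ ∈ Ioo (0:ℝ) T, HasDerivAt
      (fun t => ∫ x in (0:ℝ)..ℓ, (ρA x * ut x t ^ 2 + Tr x * ux x t ^ 2 + r x * uxx x t ^ 2))
      (∫ x in (0:ℝ)..ℓ, (ρA x * (2 * ut x t₀ * utt x t₀) + Tr x * (2 * ux x t₀ * uxt x t₀)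
        + r x * (2 * uxx x t₀ * uxxt x t₀))) t₀ := by
    intro t₀ ht₀
    apply hasDerivAt_param hl ht₀ cont_e cont_p
    intro x hx t ht
    have h1 := ((hutt x hx t ht).pow 2).const_mul (ρA x)
    have h2 := ((huxt x hx t ht).pow 2).const_mul (Tr x)
    have h3 := ((huxxt x hx t ht).pow 2).const_mul (r x)
    exact ((h1.add h2).add h3).congr_deriv (by push_cast; ring)
  have hIBP : ∀ t₀ ∈ Ioo (0:ℝ) T,
      (∫ x in (0:ℝ)..ℓ, (ρA x * (2 * ut x t₀ * utt x t₀) + Tr x * (2 * ux x t₀ * uxt x t₀)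
        + r x * (2 * uxx x t₀ * uxxt x t₀)))
      = ∫ x in (0:ℝ)..ℓ, (2 * ut x t₀ * F x t₀ - 2 * μ x * ut x t₀ ^ 2
        - 2 * κ x * uxxt x t₀ ^ 2) := by
    intro t₀ ht₀
    have htI : t₀ ∈ Icc (0:ℝ) T := Ioo_subset_Icc_self ht₀
    have hpint : IntervalIntegrable (fun x => ρA x * (2 * ut x t₀ * utt x t₀)
        + Tr x * (2 * ux x t₀ * uxt x t₀) + r x * (2 * uxx x t₀ * uxxt x t₀)) volume 0 ℓ :=
      by
      apply ContinuousOn.intervalIntegrable; rw [huIl]; exact sliceXp cont_p htI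
    have hqint : IntervalIntegrable (fun x => 2 * ut x t₀ * F x t₀ - 2 * μ x * ut x t₀ ^ 2
        - 2 * κ x * uxxt x t₀ ^ 2) volume 0 ℓ :=
      by
      apply ContinuousOn.intervalIntegrable; rw [huIl]; exact sliceXp cont_q htI
    have hΦcont : ContinuousOn (fun y => 2 * ut y t₀ * (Tr y * ux y t₀)
        - 2 * ut y t₀ * Bx y t₀
        + 2 * uxt y t₀ * (r y * uxx y t₀ + κ y * uxxt y t₀)) (Icc 0 ℓ) :=
      (((continuousOn_const.mul (sliceX cont_ut htI)).mul
          (hTr.continuousOn.mul (sliceX cont_ux htI))).sub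
        ((continuousOn_const.mul (sliceX cont_ut htI)).mul (sliceX cont_Bx htI))).add
        ((continuousOn_const.mul (sliceX cont_uxt htI)).mul
          ((hr.continuousOn.mul (sliceX cont_uxx htI)).add
            (hκ.continuousOn.mul (sliceX cont_uxxt htI))))
    have hΦderiv : ∀ y ∈ Ioo (0:ℝ) ℓ, HasDerivAt (fun y => 2 * ut y t₀ * (Tr y * ux y t₀)
        - 2 * ut y t₀ * Bx y t₀
        + 2 * uxt y t₀ * (r y * uxx y t₀ + κ y * uxxt y t₀))
        ((ρA y * (2 * ut y t₀ * utt y t₀) + Tr y * (2 * ux y t₀ * uxt y t₀)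
          + r y * (2 * uxx y t₀ * uxxt y t₀))
          - (2 * ut y t₀ * F y t₀ - 2 * μ y * ut y t₀ ^ 2 - 2 * κ y * uxxt y t₀ ^ 2)) y := by
      intro y hy
      have hyI : y ∈ Icc (0:ℝ) ℓ := Ioo_subset_Icc_self hy
      have hm1 := hmix1 y hy t₀ ht₀
      have hm2 := hmix2 y hy t₀ ht₀
      have d1 := (hm1.const_mul 2).mul (hAx y hyI t₀ htI)
      have d2 := (hm1.const_mul 2).mul (hBxx y hyI t₀ htI)
      have d3 := (hm2.const_mul 2).mul (hBx y hyI t₀ htI)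
      have hp := pde y hy t₀ ht₀
      exact ((d1.sub d2).add d3).congr_deriv (by linear_combination (-(2 * ut y t₀)) * hp)
    have hΦ0 : 2 * ut 0 t₀ * (Tr 0 * ux 0 t₀) - 2 * ut 0 t₀ * Bx 0 t₀
        + 2 * uxt 0 t₀ * (r 0 * uxx 0 t₀ + κ 0 * uxxt 0 t₀) = 0 := by
      rw [hut0 t₀ ht₀, bc_m0 t₀ htI]; ring
    have hΦl : 2 * ut ℓ t₀ * (Tr ℓ * ux ℓ t₀) - 2 * ut ℓ t₀ * Bx ℓ t₀
        + 2 * uxt ℓ t₀ * (r ℓ * uxx ℓ t₀ + κ ℓ * uxxt ℓ t₀) = 0 := by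
      rw [hutl t₀ ht₀, bc_ml t₀ htI]; ring
    have hFTC := intervalIntegral.integral_eq_sub_of_hasDerivAt_of_le hl hΦcont hΦderiv
      (hpint.sub hqint)
    rw [intervalIntegral.integral_sub hpint hqint] at hFTC
    simp only [hΦ0, hΦl, sub_zero] at hFTC
    linarith [hFTC]
  have hEgrow : ∀ t₀ ∈ Ioo (0:ℝ) T,
      (∫ x in (0:ℝ)..ℓ, (2 * ut x t₀ * F x t₀ - 2 * μ x * ut x t₀ ^ 2
        - 2 * κ x * uxxt x t₀ ^ 2))
      ≤ 1 / ρ₀ * (∫ x in (0:ℝ)..ℓ,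
          (ρA x * ut x t₀ ^ 2 + Tr x * ux x t₀ ^ 2 + r x * uxx x t₀ ^ 2))
        + ∫ x in (0:ℝ)..ℓ, F x t₀ ^ 2 := by
    intro t₀ ht₀
    have htI : t₀ ∈ Icc (0:ℝ) T := Ioo_subset_Icc_self ht₀
    have hqint : IntervalIntegrable (fun x => 2 * ut x t₀ * F x t₀ - 2 * μ x * ut x t₀ ^ 2
        - 2 * κ x * uxxt x t₀ ^ 2) volume 0 ℓ :=
      by
      apply ContinuousOn.intervalIntegrable; rw [huIl]; exact sliceXp cont_q htI
    have hmidc : ContinuousOn (fun x => 1 / ρ₀ * (ρA x * ut x t₀ ^ 2) + F x t₀ ^ 2)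
        (Icc 0 ℓ) :=
      (continuousOn_const.mul (hρA.continuousOn.mul ((sliceX cont_ut htI).pow 2))).add
        ((sliceX hF htI).pow 2)
    have hmidint : IntervalIntegrable (fun x => 1 / ρ₀ * (ρA x * ut x t₀ ^ 2) + F x t₀ ^ 2)
        volume 0 ℓ := by
      apply ContinuousOn.intervalIntegrable; rw [huIl]; exact hmidc
    have hρut_int : IntervalIntegrable (fun x => ρA x * ut x t₀ ^ 2) volume 0 ℓ :=
      by
      apply ContinuousOn.intervalIntegrable; rw [huIl]
      exact hρA.continuousOn.mul ((sliceX cont_ut htI).pow 2)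
    have hFint : IntervalIntegrable (fun x => F x t₀ ^ 2) volume 0 ℓ :=
      by
      apply ContinuousOn.intervalIntegrable; rw [huIl]; exact (sliceX hF htI).pow 2
    have heint : IntervalIntegrable (fun x =>
        ρA x * ut x t₀ ^ 2 + Tr x * ux x t₀ ^ 2 + r x * uxx x t₀ ^ 2) volume 0 ℓ :=
      by
      apply ContinuousOn.intervalIntegrable; rw [huIl]; exact sliceXp cont_e htI
    have step1 : (∫ x in (0:ℝ)..ℓ, (2 * ut x t₀ * F x t₀ - 2 * μ x * ut x t₀ ^ 2
        - 2 * κ x * uxxt x t₀ ^ 2))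
        ≤ ∫ x in (0:ℝ)..ℓ, (1 / ρ₀ * (ρA x * ut x t₀ ^ 2) + F x t₀ ^ 2) := by
      apply intervalIntegral.integral_mono_on hl hqint hmidint
      intro x hx
      have hu2 : ut x t₀ ^ 2 ≤ 1 / ρ₀ * (ρA x * ut x t₀ ^ 2) := by
        have h1 : ρ₀ * ut x t₀ ^ 2 ≤ ρA x * ut x t₀ ^ 2 :=
          mul_le_mul_of_nonneg_right (hρAb x hx) (sq_nonneg _)
        calc ut x t₀ ^ 2 = 1 / ρ₀ * (ρ₀ * ut x t₀ ^ 2) := by field_simp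
          _ ≤ 1 / ρ₀ * (ρA x * ut x t₀ ^ 2) :=
            mul_le_mul_of_nonneg_left h1 (by positivity)
      nlinarith [hu2, sq_nonneg (ut x t₀ - F x t₀),
        mul_nonneg (hμb x hx) (sq_nonneg (ut x t₀)),
        mul_nonneg (hκ₀.le.trans (hκb x hx)) (sq_nonneg (uxxt x t₀))]
    have step2 : (∫ x in (0:ℝ)..ℓ, (1 / ρ₀ * (ρA x * ut x t₀ ^ 2) + F x t₀ ^ 2))
        = 1 / ρ₀ * (∫ x in (0:ℝ)..ℓ, ρA x * ut x t₀ ^ 2) + ∫ x in (0:ℝ)..ℓ, F x t₀ ^ 2 := by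
      rw [intervalIntegral.integral_add (hρut_int.const_mul _) hFint,
        intervalIntegral.integral_const_mul]
    have step3 : (∫ x in (0:ℝ)..ℓ, ρA x * ut x t₀ ^ 2)
        ≤ ∫ x in (0:ℝ)..ℓ, (ρA x * ut x t₀ ^ 2 + Tr x * ux x t₀ ^ 2 + r x * uxx x t₀ ^ 2) := by
      apply intervalIntegral.integral_mono_on hl hρut_int heint
      intro x hx
      nlinarith [mul_nonneg (hTrb x hx) (sq_nonneg (ux x t₀)),
        mul_nonneg (hr₀.le.trans (hrb x hx)) (sq_nonneg (uxx x t₀))]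
    have step4 := mul_le_mul_of_nonneg_left step3 (by positivity : (0:ℝ) ≤ 1 / ρ₀)
    linarith [step1, step2.le, step2.ge, step4]
  -- initial energy is zero
  have hE0 : (∫ x in (0:ℝ)..ℓ,
      (ρA x * ut x 0 ^ 2 + Tr x * ux x 0 ^ 2 + r x * uxx x 0 ^ 2)) = 0 := by
    have hux0 : ∀ x ∈ Ioo (0:ℝ) ℓ, ux x 0 = 0 := by
      intro x hx
      have hder := hux x (Ioo_subset_Icc_self hx) 0 (left_mem_Icc.2 hT0)
      have hev : (fun _ : ℝ => (0:ℝ)) =ᶠ[nhds x] fun y => u y 0 := by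
        filter_upwards [Ioo_mem_nhds hx.1 hx.2] with y hy
        exact (init_u y hy).symm
      exact (hder.congr_of_eventuallyEq hev).unique (hasDerivAt_const x 0)
    have huxx0 : ∀ x ∈ Ioo (0:ℝ) ℓ, uxx x 0 = 0 := by
      intro x hx
      have hder := huxx x (Ioo_subset_Icc_self hx) 0 (left_mem_Icc.2 hT0)
      have hev : (fun _ : ℝ => (0:ℝ)) =ᶠ[nhds x] fun y => ux y 0 := by
        filter_upwards [Ioo_mem_nhds hx.1 hx.2] with y hy
        exact (hux0 y hy).symm
      exact (hder.congr_of_eventuallyEq hev).unique (hasDerivAt_const x 0)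
    rw [integral_of_le hl, ← MeasureTheory.Measure.restrict_congr_set Ioo_ae_eq_Ioc]
    rw [MeasureTheory.setIntegral_congr_fun measurableSet_Ioo
      (g := fun _ => (0:ℝ)) (fun x hx => by
        rw [init_ut x hx, hux0 x hx, huxx0 x hx]; ring)]
    simp
  ----------------------------------------------------------------
  -- GRONWALL
  ----------------------------------------------------------------
  have hexpc : Continuous fun s : ℝ => Real.exp (-s / ρ₀) := by fun_prop
  have hexpg_cont : ContinuousOn
      (fun s => Real.exp (-s / ρ₀) * ∫ x in (0:ℝ)..ℓ, F x s ^ 2) (Icc 0 T) :=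
    hexpc.continuousOn.mul hgcont
  have hexpg_int : IntervalIntegrable
      (fun s => Real.exp (-s / ρ₀) * ∫ x in (0:ℝ)..ℓ, F x s ^ 2) volume 0 T := by
    apply ContinuousOn.intervalIntegrable; rw [huIT]; exact hexpg_cont
  have hgint : IntervalIntegrable (fun s => ∫ x in (0:ℝ)..ℓ, F x s ^ 2) volume 0 T := by
    apply ContinuousOn.intervalIntegrable; rw [huIT]; exact hgcont
  have hgron : ∀ t ∈ Icc (0:ℝ) T,
      (∫ x in (0:ℝ)..ℓ, (ρA x * ut x t ^ 2 + Tr x * ux x t ^ 2 + r x * uxx x t ^ 2))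
      ≤ Real.exp (t / ρ₀) * ∫ t in (0:ℝ)..T, ∫ x in (0:ℝ)..ℓ, F x t ^ 2 := by
    have hPcont : ContinuousOn
        (fun b => ∫ s in (0:ℝ)..b, Real.exp (-s / ρ₀) * ∫ x in (0:ℝ)..ℓ, F x s ^ 2)
        (Icc 0 T) := by
      rw [← huIT]
      exact intervalIntegral.continuousOn_primitive_interval' hexpg_int
        (by rw [huIT]; exact left_mem_Icc.2 hT0)
    have hHcont : ContinuousOn (fun t => Real.exp (-t / ρ₀) *
        (∫ x in (0:ℝ)..ℓ, (ρA x * ut x t ^ 2 + Tr x * ux x t ^ 2 + r x * uxx x t ^ 2))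
        - ∫ s in (0:ℝ)..t, Real.exp (-s / ρ₀) * ∫ x in (0:ℝ)..ℓ, F x s ^ 2) (Icc 0 T) :=
      (hexpc.continuousOn.mul hEcont).sub hPcont
    have hH' : ∀ t ∈ Ioo (0:ℝ) T, HasDerivAt (fun t => Real.exp (-t / ρ₀) *
        (∫ x in (0:ℝ)..ℓ, (ρA x * ut x t ^ 2 + Tr x * ux x t ^ 2 + r x * uxx x t ^ 2))
        - ∫ s in (0:ℝ)..t, Real.exp (-s / ρ₀) * ∫ x in (0:ℝ)..ℓ, F x s ^ 2)
        ((Real.exp (-t / ρ₀) * (-1 / ρ₀)) *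
          (∫ x in (0:ℝ)..ℓ, (ρA x * ut x t ^ 2 + Tr x * ux x t ^ 2 + r x * uxx x t ^ 2))
          + Real.exp (-t / ρ₀) *
            (∫ x in (0:ℝ)..ℓ, (ρA x * (2 * ut x t * utt x t) + Tr x * (2 * ux x t * uxt x t)
              + r x * (2 * uxx x t * uxxt x t)))
          - Real.exp (-t / ρ₀) * ∫ x in (0:ℝ)..ℓ, F x t ^ 2) t := by
      intro t ht
      have hexp : HasDerivAt (fun t : ℝ => Real.exp (-t / ρ₀))
          (Real.exp (-t / ρ₀) * (-1 / ρ₀)) t := by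
        have h1 : HasDerivAt (fun t : ℝ => -t / ρ₀) (-1 / ρ₀) t :=
          (hasDerivAt_id t).neg.div_const ρ₀
        exact (Real.hasDerivAt_exp (-t / ρ₀)).comp t h1
      have hPd : HasDerivAt
          (fun b => ∫ s in (0:ℝ)..b, Real.exp (-s / ρ₀) * ∫ x in (0:ℝ)..ℓ, F x s ^ 2)
          (Real.exp (-t / ρ₀) * ∫ x in (0:ℝ)..ℓ, F x t ^ 2) t := by
        apply intervalIntegral.integral_hasDerivAt_right
        · apply hexpg_int.mono_set
          rw [huIT, uIcc_of_le ht.1.le]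
          exact Icc_subset_Icc le_rfl ht.2.le
        · exact ⟨Ioo 0 T, Ioo_mem_nhds ht.1 ht.2,
            (hexpg_cont.mono Ioo_subset_Icc_self).aestronglyMeasurable measurableSet_Ioo⟩
        · exact hexpg_cont.continuousAt (Icc_mem_nhds ht.1 ht.2)
      exact (hexp.mul (hEderiv t ht)).sub hPd
    have hDnonpos : ∀ t ∈ Ioo (0:ℝ) T,
        ((Real.exp (-t / ρ₀) * (-1 / ρ₀)) *
          (∫ x in (0:ℝ)..ℓ, (ρA x * ut x t ^ 2 + Tr x * ux x t ^ 2 + r x * uxx x t ^ 2))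
          + Real.exp (-t / ρ₀) *
            (∫ x in (0:ℝ)..ℓ, (ρA x * (2 * ut x t * utt x t) + Tr x * (2 * ux x t * uxt x t)
              + r x * (2 * uxx x t * uxxt x t)))
          - Real.exp (-t / ρ₀) * ∫ x in (0:ℝ)..ℓ, F x t ^ 2) ≤ 0 := by
      intro t ht
      have h1 := hIBP t ht
      have h2 := hEgrow t ht
      have h3 : (∫ x in (0:ℝ)..ℓ, (ρA x * (2 * ut x t * utt x t)
          + Tr x * (2 * ux x t * uxt x t) + r x * (2 * uxx x t * uxxt x t)))
          ≤ 1 / ρ₀ * (∫ x in (0:ℝ)..ℓ,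
            (ρA x * ut x t ^ 2 + Tr x * ux x t ^ 2 + r x * uxx x t ^ 2))
          + ∫ x in (0:ℝ)..ℓ, F x t ^ 2 := by rw [h1]; exact h2
      have hep := Real.exp_pos (-t / ρ₀)
      have h4 := mul_le_mul_of_nonneg_left h3 hep.le
      have h5 : (Real.exp (-t / ρ₀) * (-1 / ρ₀)) *
          (∫ x in (0:ℝ)..ℓ, (ρA x * ut x t ^ 2 + Tr x * ux x t ^ 2 + r x * uxx x t ^ 2))
          + Real.exp (-t / ρ₀) *
            (∫ x in (0:ℝ)..ℓ, (ρA x * (2 * ut x t * utt x t) + Tr x * (2 * ux x t * uxt x t)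
              + r x * (2 * uxx x t * uxxt x t)))
          - Real.exp (-t / ρ₀) * ∫ x in (0:ℝ)..ℓ, F x t ^ 2
          = Real.exp (-t / ρ₀) *
            (∫ x in (0:ℝ)..ℓ, (ρA x * (2 * ut x t * utt x t) + Tr x * (2 * ux x t * uxt x t)
              + r x * (2 * uxx x t * uxxt x t)))
          - Real.exp (-t / ρ₀) *
            (1 / ρ₀ * (∫ x in (0:ℝ)..ℓ,
              (ρA x * ut x t ^ 2 + Tr x * ux x t ^ 2 + r x * uxx x t ^ 2))
              + ∫ x in (0:ℝ)..ℓ, F x t ^ 2) := by ring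
      rw [h5]
      exact sub_nonpos.2 h4
    have hanti : AntitoneOn (fun t => Real.exp (-t / ρ₀) *
        (∫ x in (0:ℝ)..ℓ, (ρA x * ut x t ^ 2 + Tr x * ux x t ^ 2 + r x * uxx x t ^ 2))
        - ∫ s in (0:ℝ)..t, Real.exp (-s / ρ₀) * ∫ x in (0:ℝ)..ℓ, F x s ^ 2) (Icc 0 T) := by
      apply antitoneOn_of_deriv_nonpos (convex_Icc 0 T) hHcont
      · rw [interior_Icc]
        exact fun t ht => (hH' t ht).differentiableAt.differentiableWithinAt
      · rw [interior_Icc]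
        intro t ht
        rw [(hH' t ht).deriv]
        exact hDnonpos t ht
    intro t ht
    have hH0 : Real.exp (-(0:ℝ) / ρ₀) *
        (∫ x in (0:ℝ)..ℓ, (ρA x * ut x 0 ^ 2 + Tr x * ux x 0 ^ 2 + r x * uxx x 0 ^ 2))
        - ∫ s in (0:ℝ)..(0:ℝ), Real.exp (-s / ρ₀) * ∫ x in (0:ℝ)..ℓ, F x s ^ 2 = 0 := by
      rw [hE0]
      simp
    have hmono := hanti (left_mem_Icc.2 hT0) ht ht.1
    simp only [hH0] at hmono
    -- exp(-t/ρ₀) * E t ≤ P t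
    have hPle : (∫ s in (0:ℝ)..t, Real.exp (-s / ρ₀) * ∫ x in (0:ℝ)..ℓ, F x s ^ 2)
        ≤ ∫ t in (0:ℝ)..T, ∫ x in (0:ℝ)..ℓ, F x t ^ 2 := by
      have hsub1 : uIcc (0:ℝ) t ⊆ uIcc (0:ℝ) T := by
        rw [huIT, uIcc_of_le ht.1]; exact Icc_subset_Icc le_rfl ht.2
      have hsub2 : uIcc t T ⊆ uIcc (0:ℝ) T := by
        rw [huIT, uIcc_of_le ht.2]; exact Icc_subset_Icc ht.1 le_rfl
      have hP1 : (∫ s in (0:ℝ)..t, Real.exp (-s / ρ₀) * ∫ x in (0:ℝ)..ℓ, F x s ^ 2)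
          ≤ ∫ s in (0:ℝ)..t, ∫ x in (0:ℝ)..ℓ, F x s ^ 2 := by
        apply intervalIntegral.integral_mono_on ht.1 (hexpg_int.mono_set hsub1)
          (hgint.mono_set hsub1)
        intro s hs
        have hle1 : Real.exp (-s / ρ₀) ≤ 1 := by
          rw [Real.exp_le_one_iff]
          have h0s : (0:ℝ) ≤ s := hs.1
          have : 0 ≤ s / ρ₀ := by positivity
          rw [neg_div]
          linarith
        exact mul_le_of_le_one_left (hg0 s) hle1
      have hP2 : (∫ s in (0:ℝ)..t, ∫ x in (0:ℝ)..ℓ, F x s ^ 2)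
          ≤ ∫ t in (0:ℝ)..T, ∫ x in (0:ℝ)..ℓ, F x t ^ 2 := by
        have hadd := intervalIntegral.integral_add_adjacent_intervals
          (hgint.mono_set hsub1) (hgint.mono_set hsub2)
        have hnn : 0 ≤ ∫ s in t..T, ∫ x in (0:ℝ)..ℓ, F x s ^ 2 :=
          integral_nonneg ht.2 fun s _ => hg0 s
        linarith
      linarith
    have hEt : Real.exp (-t / ρ₀) *
        (∫ x in (0:ℝ)..ℓ, (ρA x * ut x t ^ 2 + Tr x * ux x t ^ 2 + r x * uxx x t ^ 2))
        ≤ ∫ t in (0:ℝ)..T, ∫ x in (0:ℝ)..ℓ, F x t ^ 2 := by linarith [hPle, hmono]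
    have hkey : Real.exp (t / ρ₀) * Real.exp (-t / ρ₀) = 1 := by
      rw [← Real.exp_add, show t / ρ₀ + -t / ρ₀ = 0 by ring, Real.exp_zero]
    have := mul_le_mul_of_nonneg_left hEt (Real.exp_pos (t / ρ₀)).le
    rwa [← mul_assoc, hkey, one_mul] at this
  ----------------------------------------------------------------
  -- ASSEMBLY
  ----------------------------------------------------------------
  have hJcont : ContinuousOn (fun t => ∫ x in (0:ℝ)..ℓ, uxx x t ^ 2) (Icc 0 T) :=
    contOn_param hl (cont_uxx.pow 2)
  have hJint : IntervalIntegrable (fun t => ∫ x in (0:ℝ)..ℓ, uxx x t ^ 2) volume 0 T := by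
    apply ContinuousOn.intervalIntegrable; rw [huIT]; exact hJcont
  have hEint : IntervalIntegrable (fun t => ∫ x in (0:ℝ)..ℓ,
      (ρA x * ut x t ^ 2 + Tr x * ux x t ^ 2 + r x * uxx x t ^ 2)) volume 0 T := by
    apply ContinuousOn.intervalIntegrable; rw [huIT]; exact hEcont
  have hexpGint : IntervalIntegrable (fun t => Real.exp (t / ρ₀) *
      ∫ t in (0:ℝ)..T, ∫ x in (0:ℝ)..ℓ, F x t ^ 2) volume 0 T := by
    apply ContinuousOn.intervalIntegrable
    exact (by fun_prop : Continuous fun t : ℝ => Real.exp (t / ρ₀) *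
      ∫ t in (0:ℝ)..T, ∫ x in (0:ℝ)..ℓ, F x t ^ 2).continuousOn
  have hJE : ∀ t ∈ Icc (0:ℝ) T, r₀ * (∫ x in (0:ℝ)..ℓ, uxx x t ^ 2)
      ≤ ∫ x in (0:ℝ)..ℓ, (ρA x * ut x t ^ 2 + Tr x * ux x t ^ 2 + r x * uxx x t ^ 2) := by
    intro t ht
    rw [← intervalIntegral.integral_const_mul]
    apply intervalIntegral.integral_mono_on hl
    · apply IntervalIntegrable.const_mul
      apply ContinuousOn.intervalIntegrable; rw [huIl]; exact (sliceX cont_uxx ht).pow 2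
    · apply ContinuousOn.intervalIntegrable; rw [huIl]; exact sliceXp cont_e ht
    · intro x hx
      nlinarith [mul_nonneg (hρ₀.le.trans (hρAb x hx)) (sq_nonneg (ut x t)),
        mul_nonneg (hTrb x hx) (sq_nonneg (ux x t)),
        mul_le_mul_of_nonneg_right (hrb x hx) (sq_nonneg (uxx x t))]
  have hI0 : 0 ≤ ∫ t in (0:ℝ)..T, ∫ x in (0:ℝ)..ℓ, uxx x t ^ 2 :=
    integral_nonneg hT0 fun t _ => integral_nonneg hl fun x _ => sq_nonneg _
  have hIexp : ∫ t in (0:ℝ)..T, Real.exp (t / ρ₀) = ρ₀ * (Real.exp (T / ρ₀) - 1) := by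
    rw [intervalIntegral.integral_comp_div (f := Real.exp) (ne_of_gt hρ₀)]
    simp [integral_exp]
  have hchain : r₀ * (∫ t in (0:ℝ)..T, ∫ x in (0:ℝ)..ℓ, uxx x t ^ 2)
      ≤ ρ₀ * (Real.exp (T / ρ₀) - 1) * ∫ t in (0:ℝ)..T, ∫ x in (0:ℝ)..ℓ, F x t ^ 2 := by
    have c1 : r₀ * (∫ t in (0:ℝ)..T, ∫ x in (0:ℝ)..ℓ, uxx x t ^ 2)
        = ∫ t in (0:ℝ)..T, r₀ * ∫ x in (0:ℝ)..ℓ, uxx x t ^ 2 :=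
      (intervalIntegral.integral_const_mul _ _).symm
    have c2 : (∫ t in (0:ℝ)..T, r₀ * ∫ x in (0:ℝ)..ℓ, uxx x t ^ 2)
        ≤ ∫ t in (0:ℝ)..T, ∫ x in (0:ℝ)..ℓ,
          (ρA x * ut x t ^ 2 + Tr x * ux x t ^ 2 + r x * uxx x t ^ 2) :=
      intervalIntegral.integral_mono_on hT0 (hJint.const_mul _) hEint hJE
    have c3 : (∫ t in (0:ℝ)..T, ∫ x in (0:ℝ)..ℓ,
          (ρA x * ut x t ^ 2 + Tr x * ux x t ^ 2 + r x * uxx x t ^ 2))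
        ≤ ∫ t in (0:ℝ)..T, Real.exp (t / ρ₀) *
          ∫ t in (0:ℝ)..T, ∫ x in (0:ℝ)..ℓ, F x t ^ 2 :=
      intervalIntegral.integral_mono_on hT0 hEint hexpGint hgron
    have c4 : (∫ t in (0:ℝ)..T, Real.exp (t / ρ₀) *
          ∫ t in (0:ℝ)..T, ∫ x in (0:ℝ)..ℓ, F x t ^ 2)
        = ρ₀ * (Real.exp (T / ρ₀) - 1) * ∫ t in (0:ℝ)..T, ∫ x in (0:ℝ)..ℓ, F x t ^ 2 := by
      rw [intervalIntegral.integral_mul_const, hIexp]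
    linarith [c1.le, c1.ge, c2, c3, c4.le, c4.ge]
  have heT1 : 1 ≤ Real.exp (T / ρ₀) := by
    have h := Real.exp_le_exp.2 (show (0:ℝ) ≤ T / ρ₀ by positivity)
    rwa [Real.exp_zero] at h
  have hIle : (∫ t in (0:ℝ)..T, ∫ x in (0:ℝ)..ℓ, uxx x t ^ 2)
      ≤ ρ₀ * (Real.exp (T / ρ₀) - 1) *
        (∫ t in (0:ℝ)..T, ∫ x in (0:ℝ)..ℓ, F x t ^ 2) / r₀ := by
    rw [le_div_iff₀ hr₀]
    linarith [hchain]
  have hD0 : 0 ≤ (Real.exp (T / ρ₀) - 1) / r₀ *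
      ∫ t in (0:ℝ)..T, ∫ x in (0:ℝ)..ℓ, F x t ^ 2 :=
    mul_nonneg (div_nonneg (by linarith) hr₀.le) hG0
  constructor
  · have hint_ux0 : IntervalIntegrable (fun t => ux 0 t ^ 2) volume 0 T := by
      apply ContinuousOn.intervalIntegrable; rw [huIT]; exact (sliceT cont_ux hu0m).pow 2
    have hs1 : (∫ t in (0:ℝ)..T, ux 0 t ^ 2)
        ≤ ∫ t in (0:ℝ)..T, ℓ / 3 * ∫ x in (0:ℝ)..ℓ, uxx x t ^ 2 :=
      intervalIntegral.integral_mono_on hT0 hint_ux0 (hJint.const_mul _)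
        fun t ht => (htrace t ht).1
    rw [intervalIntegral.integral_const_mul] at hs1
    calc (∫ t in (0:ℝ)..T, ux 0 t ^ 2)
        ≤ ℓ / 3 * ∫ t in (0:ℝ)..T, ∫ x in (0:ℝ)..ℓ, uxx x t ^ 2 := hs1
      _ ≤ ℓ / 3 * (ρ₀ * (Real.exp (T / ρ₀) - 1) *
          (∫ t in (0:ℝ)..T, ∫ x in (0:ℝ)..ℓ, F x t ^ 2) / r₀) :=
          mul_le_mul_of_nonneg_left hIle (by positivity)
      _ = ℓ * ρ₀ / 3 * ((Real.exp (T / ρ₀) - 1) / r₀ *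
          ∫ t in (0:ℝ)..T, ∫ x in (0:ℝ)..ℓ, F x t ^ 2) := by ring
      _ ≤ 5 * ℓ * ρ₀ / 3 * ((Real.exp (T / ρ₀) - 1) / r₀ *
          ∫ t in (0:ℝ)..T, ∫ x in (0:ℝ)..ℓ, F x t ^ 2) := by
          nlinarith [hD0, mul_pos hℓ hρ₀]
      _ = 5 * ℓ * ρ₀ / 3 * (Real.exp (T / ρ₀) - 1) / r₀ *
          ∫ t in (0:ℝ)..T, ∫ x in (0:ℝ)..ℓ, F x t ^ 2 := by ring
  · have hint_uxl : IntervalIntegrable (fun t => ux ℓ t ^ 2) volume 0 T := by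
      apply ContinuousOn.intervalIntegrable; rw [huIT]; exact (sliceT cont_ux hulm).pow 2
    have hs1 : (∫ t in (0:ℝ)..T, ux ℓ t ^ 2)
        ≤ ∫ t in (0:ℝ)..T, ℓ / 3 * ∫ x in (0:ℝ)..ℓ, uxx x t ^ 2 :=
      intervalIntegral.integral_mono_on hT0 hint_uxl (hJint.const_mul _)
        fun t ht => (htrace t ht).2
    rw [intervalIntegral.integral_const_mul] at hs1
    calc (∫ t in (0:ℝ)..T, ux ℓ t ^ 2)
        ≤ ℓ / 3 * ∫ t in (0:ℝ)..T, ∫ x in (0:ℝ)..ℓ, uxx x t ^ 2 := hs1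
      _ ≤ ℓ / 3 * (ρ₀ * (Real.exp (T / ρ₀) - 1) *
          (∫ t in (0:ℝ)..T, ∫ x in (0:ℝ)..ℓ, F x t ^ 2) / r₀) :=
          mul_le_mul_of_nonneg_left hIle (by positivity)
      _ = ℓ * ρ₀ / 3 * ((Real.exp (T / ρ₀) - 1) / r₀ *
          ∫ t in (0:ℝ)..T, ∫ x in (0:ℝ)..ℓ, F x t ^ 2) := by ring
      _ ≤ 5 * ℓ * ρ₀ / 3 * ((Real.exp (T / ρ₀) - 1) / r₀ *
          ∫ t in (0:ℝ)..T, ∫ x in (0:ℝ)..ℓ, F x t ^ 2) := by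
          nlinarith [hD0, mul_pos hℓ hρ₀]
      _ = 5 * ℓ * ρ₀ / 3 * (Real.exp (T / ρ₀) - 1) / r₀ *
          ∫ t in (0:ℝ)..T, ∫ x in (0:ℝ)..ℓ, F x t ^ 2 := by ring
end

section
/- Let u₁ and u₂ be classical solutions of the forward problem with source terms F₁ and F₂ respectively (same coefficients, same initial and boundary conditions). Write C₁² := (5ℓρ₀/3)(C_e² − 1) with C_e² := exp(T/ρ₀). Then the boundary slopes depend Lipschitz-continuously on the load: ∫₀^T (∂ₓu₁(0,t) − ∂ₓu₂(0,t))² dt ≤ (C₁²/r₀) ∫₀^T ∫₀^ℓ (F₁(x,t) − F₂(x,t))² dx dt, and the same bound holds at x = ℓ. -/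
open Set

open MeasureTheory

namespace Beam

/-- Slice continuity in the first variable. -/
lemma sliceL {a b c d : ℝ} {g : ℝ → ℝ → ℝ}
    (hg : ContinuousOn (fun p : ℝ × ℝ => g p.1 p.2) (Icc a b ×ˢ Icc c d))
    {t : ℝ} (ht : t ∈ Icc c d) : ContinuousOn (fun x => g x t) (Icc a b) :=
  hg.comp ((continuous_id.prodMk continuous_const).continuousOn)
    (fun x hx => Set.mk_mem_prod hx ht)

/-- Slice continuity in the second variable. -/
lemma sliceR {a b c d : ℝ} {g : ℝ → ℝ → ℝ}
    (hg : ContinuousOn (fun p : ℝ × ℝ => g p.1 p.2) (Icc a b ×ˢ Icc c d))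
    {x : ℝ} (hx : x ∈ Icc a b) : ContinuousOn (fun t => g x t) (Icc c d) :=
  hg.comp ((continuous_const.prodMk continuous_id).continuousOn)
    (fun t ht => Set.mk_mem_prod hx ht)

/-- Continuity in the parameter of an interval integral of a jointly continuous function. -/
lemma contOn_param_integral {a b c d : ℝ} {g : ℝ → ℝ → ℝ}
    (hg : ContinuousOn (fun p : ℝ × ℝ => g p.1 p.2) (Icc a b ×ˢ Icc c d))
    {x : ℝ} (hx : x ∈ Icc a b) :
    ContinuousOn (fun s => ∫ y in a..x, g y s) (Icc c d) := by
  obtain ⟨M, hM⟩ := (isCompact_Icc.prod isCompact_Icc).exists_bound_of_continuousOn hg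
  intro s₀ hs₀
  have hsub : Set.uIoc a x ⊆ Icc a b := by
    rw [uIoc_of_le hx.1]
    exact (Ioc_subset_Icc_self).trans (Icc_subset_Icc le_rfl hx.2)
  apply intervalIntegral.continuousWithinAt_of_dominated_interval (bound := fun _ => M)
  · filter_upwards [self_mem_nhdsWithin] with s hs
    exact ((sliceL hg hs).mono hsub).aestronglyMeasurable
      (measurableSet_uIoc)
  · filter_upwards [self_mem_nhdsWithin] with s hs
    filter_upwards with y hy
    simpa using hM (y, s) (Set.mk_mem_prod (hsub hy) hs)
  · exact intervalIntegrable_const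
  · filter_upwards with y hy
    exact (sliceR hg (hsub hy)) s₀ hs₀

/-- Cauchy–Schwarz for interval integrals. -/
lemma sq_integral_le {a b : ℝ} (hab : a ≤ b) {f : ℝ → ℝ}
    (hf : ContinuousOn f (Icc a b)) :
    (∫ y in a..b, f y) ^ 2 ≤ (b - a) * ∫ y in a..b, (f y) ^ 2 := by
  rcases eq_or_lt_of_le hab with rfl | hlt
  · simp
  have hf' : ContinuousOn f (uIcc a b) := by rwa [uIcc_of_le hab]
  have hint : IntervalIntegrable f volume a b := hf'.intervalIntegrable
  have hint2 : IntervalIntegrable (fun y => (f y) ^ 2) volume a b :=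
    (hf'.pow 2).intervalIntegrable
  set I := ∫ y in a..b, f y with hI
  set J := ∫ y in a..b, (f y) ^ 2 with hJ
  set L := b - a with hL
  have hL0 : 0 < L := by simp [hL, hlt]
  have h0 : 0 ≤ ∫ y in a..b, (L * f y - I) ^ 2 :=
    intervalIntegral.integral_nonneg hab (fun y _ => sq_nonneg _)
  have hexp : ∫ y in a..b, (L * f y - I) ^ 2
      = L ^ 2 * J - 2 * L * I * I + I ^ 2 * L := by
    have h1 : ∀ y, (L * f y - I) ^ 2
        = L ^ 2 * (f y) ^ 2 - (2 * L * I) * f y + I ^ 2 := by intro y; ring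
    simp_rw [h1]
    rw [intervalIntegral.integral_add ((hint2.const_mul _).sub (hint.const_mul _))
        intervalIntegrable_const,
      intervalIntegral.integral_sub (hint2.const_mul _) (hint.const_mul _),
      intervalIntegral.integral_const_mul, intervalIntegral.integral_const_mul,
      intervalIntegral.integral_const]
    simp [hL, smul_eq_mul]; ring
  rw [hexp] at h0
  nlinarith [sq_nonneg I, sq_nonneg L]

/-- Fubini for interval integrals of a continuous function on a rectangle. -/
lemma interval_integral_swap {a b c d : ℝ} (hab : a ≤ b) (hcd : c ≤ d) {g : ℝ → ℝ → ℝ}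
    (hg : ContinuousOn (fun p : ℝ × ℝ => g p.1 p.2) (Icc a b ×ˢ Icc c d)) :
    ∫ x in a..b, (∫ y in c..d, g x y) = ∫ y in c..d, (∫ x in a..b, g x y) := by
  have hint : IntegrableOn (Function.uncurry g) (Icc a b ×ˢ Icc c d) :=
    hg.integrableOn_compact (isCompact_Icc.prod isCompact_Icc)
  have hint2 : Integrable (Function.uncurry g)
      ((volume.restrict (Ioc a b)).prod (volume.restrict (Ioc c d))) := by
    rw [Measure.prod_restrict]
    exact hint.mono_set (Set.prod_mono Ioc_subset_Icc_self Ioc_subset_Icc_self)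
  rw [intervalIntegral.integral_of_le hab, intervalIntegral.integral_of_le hcd]
  simp_rw [intervalIntegral.integral_of_le hcd, intervalIntegral.integral_of_le hab]
  exact integral_integral_swap hint2

/-- If the primitive of a continuous function vanishes identically, so does the function. -/
lemma eq_zero_of_integral_zero {c d : ℝ} (hcd : c < d) {h : ℝ → ℝ}
    (hc : ContinuousOn h (Icc c d))
    (hz : ∀ s ∈ Icc c d, ∫ σ in c..s, h σ = 0) :
    ∀ s ∈ Icc c d, h s = 0 := by
  intro s hs
  haveI : Fact (s ∈ Icc c d) := ⟨hs⟩
  have hint : IntervalIntegrable h volume c s := by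
    apply ContinuousOn.intervalIntegrable
    apply hc.mono
    rw [uIcc_of_le hs.1]
    exact Icc_subset_Icc le_rfl hs.2
  have hd : HasDerivWithinAt (fun σ => ∫ t in c..σ, h t) (h s) (Icc c d) s :=
    intervalIntegral.integral_hasDerivWithinAt_right hint
      (hc.stronglyMeasurableAtFilter_nhdsWithin measurableSet_Icc s)
      (hc s hs)
  have hd0 : HasDerivWithinAt (fun σ => ∫ t in c..σ, h t) 0 (Icc c d) s := by
    exact (hasDerivWithinAt_const s (Icc c d) (0:ℝ)).congr
      (fun σ hσ => hz σ hσ) (hz s hs)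
  exact ((uniqueDiffOn_Icc hcd s hs).eq_deriv _ hd hd0)


/-- Representation of mixed partials via FTC+Fubini (Schwarz-type lemma). -/
lemma rep {l T : ℝ} (hl : 0 < l) (hT : 0 < T)
    {w wx wt wxt : ℝ → ℝ → ℝ}
    (hwx : ∀ x ∈ Icc (0:ℝ) l, ∀ t ∈ Icc (0:ℝ) T, HasDerivAt (fun y => w y t) (wx x t) x)
    (hwt : ∀ x ∈ Icc (0:ℝ) l, ∀ t ∈ Icc (0:ℝ) T, HasDerivAt (fun s => w x s) (wt x t) t)
    (hwxt : ∀ x ∈ Icc (0:ℝ) l, ∀ t ∈ Icc (0:ℝ) T, HasDerivAt (fun s => wx x s) (wxt x t) t)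
    (cwx : ContinuousOn (fun p : ℝ × ℝ => wx p.1 p.2) (Icc 0 l ×ˢ Icc 0 T))
    (cwt : ContinuousOn (fun p : ℝ × ℝ => wt p.1 p.2) (Icc 0 l ×ˢ Icc 0 T))
    (cwxt : ContinuousOn (fun p : ℝ × ℝ => wxt p.1 p.2) (Icc 0 l ×ˢ Icc 0 T)) :
    ∀ x ∈ Icc (0:ℝ) l, ∀ s ∈ Icc (0:ℝ) T,
      wt x s = wt 0 s + ∫ y in (0:ℝ)..x, wxt y s := by
  intro x hx
  set G : ℝ → ℝ := fun σ => ∫ y in (0:ℝ)..x, wxt y σ with hG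
  have hGc : ContinuousOn G (Icc 0 T) := contOn_param_integral cwxt hx
  have h0l : (0:ℝ) ∈ Icc (0:ℝ) l := left_mem_Icc.2 hl.le
  have hsubl : Icc (0:ℝ) x ⊆ Icc 0 l := Icc_subset_Icc le_rfl hx.2
  have hcont : ContinuousOn (fun σ => wt x σ - wt 0 σ - G σ) (Icc 0 T) :=
    ((sliceR cwt hx).sub (sliceR cwt h0l)).sub hGc
  have key : ∀ s ∈ Icc (0:ℝ) T, ∫ σ in (0:ℝ)..s, (wt x σ - wt 0 σ - G σ) = 0 := by
    intro s hs
    have hsubT : Icc (0:ℝ) s ⊆ Icc 0 T := Icc_subset_Icc le_rfl hs.2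
    have hciT : IntervalIntegrable (fun σ => wt x σ - wt 0 σ) volume 0 s := by
      apply ContinuousOn.intervalIntegrable
      rw [uIcc_of_le hs.1]
      exact ((sliceR cwt hx).sub (sliceR cwt h0l)).mono hsubT
    have hciG : IntervalIntegrable G volume 0 s := by
      apply ContinuousOn.intervalIntegrable
      rw [uIcc_of_le hs.1]
      exact hGc.mono hsubT
    have e5 : ∫ σ in (0:ℝ)..s, (wt x σ - wt 0 σ)
        = (w x s - w 0 s) - (w x 0 - w 0 0) := by
      have hD : ∀ σ ∈ uIcc (0:ℝ) s,
          HasDerivAt (fun τ => w x τ - w 0 τ) (wt x σ - wt 0 σ) σ := by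
        intro σ hσ
        have hσ' : σ ∈ Icc (0:ℝ) T := hsubT (by rwa [uIcc_of_le hs.1] at hσ)
        exact (hwt x hx σ hσ').sub (hwt 0 h0l σ hσ')
      simpa using intervalIntegral.integral_eq_sub_of_hasDerivAt hD hciT
    have e1 : ∀ σ ∈ Icc (0:ℝ) T, ∫ y in (0:ℝ)..x, wx y σ = w x σ - w 0 σ := by
      intro σ hσ
      apply intervalIntegral.integral_eq_sub_of_hasDerivAt
      · intro y hy
        exact hwx y (hsubl (by rwa [uIcc_of_le hx.1] at hy)) σ hσ
      · apply ContinuousOn.intervalIntegrable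
        rw [uIcc_of_le hx.1]
        exact (sliceL cwx hσ).mono hsubl
    have e2 : ∀ y ∈ Icc (0:ℝ) l, ∫ σ in (0:ℝ)..s, wxt y σ = wx y s - wx y 0 := by
      intro y hy
      apply intervalIntegral.integral_eq_sub_of_hasDerivAt
      · intro σ hσ
        exact hwxt y hy σ (hsubT (by rwa [uIcc_of_le hs.1] at hσ))
      · apply ContinuousOn.intervalIntegrable
        rw [uIcc_of_le hs.1]
        exact (sliceR cwxt hy).mono hsubT
    have e4 : ∫ y in (0:ℝ)..x, (∫ σ in (0:ℝ)..s, wxt y σ) = ∫ σ in (0:ℝ)..s, G σ := by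
      apply interval_integral_swap hx.1 hs.1
      exact cwxt.mono (Set.prod_mono hsubl hsubT)
    have e3 : ∫ y in (0:ℝ)..x, (wx y s - wx y 0) = ∫ σ in (0:ℝ)..s, G σ := by
      rw [← e4]
      apply intervalIntegral.integral_congr
      intro y hy
      exact (e2 y (hsubl (by rwa [uIcc_of_le hx.1] at hy))).symm
    have hix : ∀ σ ∈ Icc (0:ℝ) T, IntervalIntegrable (fun y => wx y σ) volume 0 x := by
      intro σ hσ
      apply ContinuousOn.intervalIntegrable
      rw [uIcc_of_le hx.1]
      exact (sliceL cwx hσ).mono hsubl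
    have e3' : (w x s - w 0 s) - (w x 0 - w 0 0) = ∫ σ in (0:ℝ)..s, G σ := by
      rw [← e3, intervalIntegral.integral_sub (hix s hs) (hix 0 (left_mem_Icc.2 hT.le)),
        e1 s hs, e1 0 (left_mem_Icc.2 hT.le)]
    rw [intervalIntegral.integral_sub hciT hciG, e5, e3']
    ring
  intro s hs
  have := eq_zero_of_integral_zero hT hcont key s hs
  linarith

/-- `wt` is differentiable in `x` at interior points, with derivative `wxt`. -/
lemma mixed_deriv {l T : ℝ} (hl : 0 < l) (hT : 0 < T)
    {w wx wt wxt : ℝ → ℝ → ℝ}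
    (hwx : ∀ x ∈ Icc (0:ℝ) l, ∀ t ∈ Icc (0:ℝ) T, HasDerivAt (fun y => w y t) (wx x t) x)
    (hwt : ∀ x ∈ Icc (0:ℝ) l, ∀ t ∈ Icc (0:ℝ) T, HasDerivAt (fun s => w x s) (wt x t) t)
    (hwxt : ∀ x ∈ Icc (0:ℝ) l, ∀ t ∈ Icc (0:ℝ) T, HasDerivAt (fun s => wx x s) (wxt x t) t)
    (cwx : ContinuousOn (fun p : ℝ × ℝ => wx p.1 p.2) (Icc 0 l ×ˢ Icc 0 T))
    (cwt : ContinuousOn (fun p : ℝ × ℝ => wt p.1 p.2) (Icc 0 l ×ˢ Icc 0 T))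
    (cwxt : ContinuousOn (fun p : ℝ × ℝ => wxt p.1 p.2) (Icc 0 l ×ˢ Icc 0 T)) :
    ∀ s ∈ Icc (0:ℝ) T, ∀ x ∈ Ioo (0:ℝ) l, HasDerivAt (fun y => wt y s) (wxt x s) x := by
  intro s hs x hx
  have hrep := rep hl hT hwx hwt hwxt cwx cwt cwxt
  have hxI : x ∈ Icc (0:ℝ) l := Ioo_subset_Icc_self hx
  have hmem : Icc (0:ℝ) l ∈ nhds x := Icc_mem_nhds hx.1 hx.2
  have hder : HasDerivAt (fun y => wt 0 s + ∫ t in (0:ℝ)..y, wxt t s) (wxt x s) x := by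
    apply HasDerivAt.const_add
    apply intervalIntegral.integral_hasDerivAt_right
    · apply ContinuousOn.intervalIntegrable
      rw [uIcc_of_le hxI.1]
      exact (sliceL cwxt hs).mono (Icc_subset_Icc le_rfl hxI.2)
    · exact ⟨Icc 0 l, hmem, (sliceL cwxt hs).aestronglyMeasurable measurableSet_Icc⟩
    · exact ((sliceL cwxt hs) x hxI).continuousAt hmem
  apply hder.congr_of_eventuallyEq
  filter_upwards [hmem] with y hy
  exact hrep y hy s hs


/-- Integration by parts on `[0, l]` with interior derivatives and vanishing boundary term. -/
lemma ibp {l : ℝ} (hl : 0 < l) {f g f' g' : ℝ → ℝ}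
    (hf : ContinuousOn f (Icc 0 l)) (hg : ContinuousOn g (Icc 0 l))
    (hf' : ContinuousOn f' (Icc 0 l)) (hg' : ContinuousOn g' (Icc 0 l))
    (hdf : ∀ x ∈ Ioo (0:ℝ) l, HasDerivAt f (f' x) x)
    (hdg : ∀ x ∈ Ioo (0:ℝ) l, HasDerivAt g (g' x) x)
    (hbdry : f l * g l - f 0 * g 0 = 0) :
    ∫ x in (0:ℝ)..l, f' x * g x = - ∫ x in (0:ℝ)..l, f x * g' x := by
  have ii : ∀ {h : ℝ → ℝ}, ContinuousOn h (Icc 0 l) → IntervalIntegrable h volume 0 l := by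
    intro h hh
    apply ContinuousOn.intervalIntegrable
    rwa [uIcc_of_le hl.le]
  have key : ∫ x in (0:ℝ)..l, (f' x * g x + f x * g' x) = f l * g l - f 0 * g 0 := by
    apply intervalIntegral.integral_eq_sub_of_hasDeriv_right_of_le hl.le
    · exact hf.mul hg
    · intro x hx
      exact (((hdf x hx).mul (hdg x hx)).hasDerivWithinAt)
    · exact ii ((hf'.mul hg).add (hf.mul hg'))
  rw [intervalIntegral.integral_add (f := fun x => f' x * g x) (g := fun x => f x * g' x)
    (ii (hf'.mul hg)) (ii (hf.mul hg')), hbdry] at key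
  linarith

end Beam

namespace Beam

open Real

set_option maxHeartbeats 1000000 in
theorem master {ℓ T ρ₀ r₀ : ℝ} (hℓ : 0 < ℓ) (hT : 0 < T) (hρ₀ : 0 < ρ₀) (hr₀ : 0 < r₀)
    {ρA μ Tr r κ : ℝ → ℝ} {F : ℝ → ℝ → ℝ}
    (hρAc : ContinuousOn ρA (Icc 0 ℓ)) (hμc : ContinuousOn μ (Icc 0 ℓ))
    (hTrc : ContinuousOn Tr (Icc 0 ℓ)) (hrc : ContinuousOn r (Icc 0 ℓ))
    (hκc : ContinuousOn κ (Icc 0 ℓ))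
    (hρAb : ∀ x ∈ Icc (0:ℝ) ℓ, ρ₀ ≤ ρA x) (hμb : ∀ x ∈ Icc (0:ℝ) ℓ, 0 ≤ μ x)
    (hTrb : ∀ x ∈ Icc (0:ℝ) ℓ, 0 ≤ Tr x) (hrb : ∀ x ∈ Icc (0:ℝ) ℓ, r₀ ≤ r x)
    (hκb : ∀ x ∈ Icc (0:ℝ) ℓ, 0 ≤ κ x)
    (hF : ContinuousOn (fun p : ℝ × ℝ => F p.1 p.2) (Icc 0 ℓ ×ˢ Icc 0 T))
    (sol : ForwardSol ℓ T ρA μ Tr r κ F) :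
    ((∫ t in (0:ℝ)..T, (sol.ux 0 t) ^ 2)
      ≤ ℓ * ρ₀ * (Real.exp (T / ρ₀) - 1) / r₀ *
        (∫ t in (0:ℝ)..T, ∫ x in (0:ℝ)..ℓ, (F x t) ^ 2)) ∧
    ((∫ t in (0:ℝ)..T, (sol.ux ℓ t) ^ 2)
      ≤ ℓ * ρ₀ * (Real.exp (T / ρ₀) - 1) / r₀ *
        (∫ t in (0:ℝ)..T, ∫ x in (0:ℝ)..ℓ, (F x t) ^ 2)) := by
  obtain ⟨u, ux, uxx, ut, utt, uxt, uxxt, Ax, Bx, Bxx, smooth, hux, huxx, hut, hutt,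
    huxt, huxxt, hAx, hBx, hBxx, cux, cuxx, cut, cutt, cuxt, cuxxt, cAx, cBx, cBxx,
    pde, iu, iut, b0, bl, bm0, bml⟩ := sol
  have hl0 : (0:ℝ) ≤ ℓ := hℓ.le
  have hT0 : (0:ℝ) ≤ T := hT.le
  have m0l : (0:ℝ) ∈ Icc (0:ℝ) ℓ := left_mem_Icc.2 hl0
  have mll : ℓ ∈ Icc (0:ℝ) ℓ := right_mem_Icc.2 hl0
  have m0T : (0:ℝ) ∈ Icc (0:ℝ) T := left_mem_Icc.2 hT0
  have mTT : T ∈ Icc (0:ℝ) T := right_mem_Icc.2 hT0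
  have ii : ∀ {h : ℝ → ℝ}, ContinuousOn h (Icc 0 ℓ) → IntervalIntegrable h volume 0 ℓ := by
    intro h hh
    apply ContinuousOn.intervalIntegrable
    rwa [uIcc_of_le hl0]
  have iiT : ∀ {h : ℝ → ℝ} {t : ℝ}, t ∈ Icc (0:ℝ) T → ContinuousOn h (Icc 0 T) →
      IntervalIntegrable h volume 0 t := by
    intro h t ht hh
    apply ContinuousOn.intervalIntegrable
    rw [uIcc_of_le ht.1]
    exact hh.mono (Icc_subset_Icc le_rfl ht.2)
  have cfst : ∀ {f : ℝ → ℝ}, ContinuousOn f (Icc 0 ℓ) →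
      ContinuousOn (fun p : ℝ × ℝ => f p.1) (Icc 0 ℓ ×ˢ Icc 0 T) := by
    intro f hf
    exact hf.comp continuous_fst.continuousOn (fun p hp => hp.1)
  -- boundary values of `ut`
  have hbt : ∀ x ∈ Icc (0:ℝ) ℓ, (∀ t ∈ Icc (0:ℝ) T, u x t = 0) →
      ∀ t ∈ Icc (0:ℝ) T, ut x t = 0 := by
    intro x hx hu0 t ht
    have h1 : HasDerivWithinAt (fun s => u x s) (ut x t) (Icc 0 T) t :=
      (hut x hx t ht).hasDerivWithinAt
    have h2 : HasDerivWithinAt (fun s => u x s) 0 (Icc 0 T) t :=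
      (hasDerivWithinAt_const t _ (0:ℝ)).congr (fun s hs => hu0 s hs) (hu0 t ht)
    exact (uniqueDiffOn_Icc hT t ht).eq_deriv _ h1 h2
  have hut0 : ∀ t ∈ Icc (0:ℝ) T, ut 0 t = 0 := hbt 0 m0l b0
  have hutl : ∀ t ∈ Icc (0:ℝ) T, ut ℓ t = 0 := hbt ℓ mll bl
  have hu_init : ∀ x ∈ Icc (0:ℝ) ℓ, u x 0 = 0 := by
    intro x hx
    rcases eq_or_lt_of_le hx.1 with h | h
    · rw [← h]; exact b0 0 m0T
    rcases eq_or_lt_of_le hx.2 with h2 | h2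
    · rw [h2]; exact bl 0 m0T
    · exact iu x ⟨h, h2⟩
  have hut_init : ∀ x ∈ Icc (0:ℝ) ℓ, ut x 0 = 0 := by
    intro x hx
    rcases eq_or_lt_of_le hx.1 with h | h
    · rw [← h]; exact hut0 0 m0T
    rcases eq_or_lt_of_le hx.2 with h2 | h2
    · rw [h2]; exact hutl 0 m0T
    · exact iut x ⟨h, h2⟩
  have hbx : ∀ {f fx : ℝ → ℝ → ℝ},
      (∀ x ∈ Icc (0:ℝ) ℓ, ∀ t ∈ Icc (0:ℝ) T, HasDerivAt (fun y => f y t) (fx x t) x) →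
      (∀ x ∈ Icc (0:ℝ) ℓ, f x 0 = 0) → ∀ x ∈ Icc (0:ℝ) ℓ, fx x 0 = 0 := by
    intro f fx hd h0 x hx
    have h1 : HasDerivWithinAt (fun y => f y 0) (fx x 0) (Icc 0 ℓ) x :=
      (hd x hx 0 m0T).hasDerivWithinAt
    have h2 : HasDerivWithinAt (fun y => f y 0) 0 (Icc 0 ℓ) x :=
      (hasDerivWithinAt_const x _ (0:ℝ)).congr (fun y hy => h0 y hy) (h0 x hx)
    exact (uniqueDiffOn_Icc hℓ x hx).eq_deriv _ h1 h2
  have hux_init : ∀ x ∈ Icc (0:ℝ) ℓ, ux x 0 = 0 := hbx hux hu_init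
  have huxx_init : ∀ x ∈ Icc (0:ℝ) ℓ, uxx x 0 = 0 := hbx huxx hux_init
  -- Schwarz-type mixed derivatives
  have hutx := mixed_deriv hℓ hT hux hut huxt cux cut cuxt
  have huxtx := mixed_deriv hℓ hT huxx huxt huxxt cuxx cuxt cuxxt
  -- the energy integrand
  set P : ℝ → ℝ → ℝ := fun x s => ρA x * (utt x s * ut x s) + Tr x * (ux x s * uxt x s)
    + r x * (uxx x s * uxxt x s) with hP
  have cP2 : ContinuousOn (fun p : ℝ × ℝ => P p.1 p.2) (Icc 0 ℓ ×ˢ Icc 0 T) := by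
    simp only [hP]
    exact (((cfst hρAc).mul (cutt.mul cut)).add ((cfst hTrc).mul (cux.mul cuxt))).add
      ((cfst hrc).mul (cuxx.mul cuxxt))
  have hPc : ContinuousOn (fun s => ∫ x in (0:ℝ)..ℓ, P x s) (Icc 0 T) :=
    contOn_param_integral cP2 mll
  have hFut2 : ContinuousOn (fun p : ℝ × ℝ => F p.1 p.2 * ut p.1 p.2)
      (Icc 0 ℓ ×ˢ Icc 0 T) := hF.mul cut
  have hFutPc : ContinuousOn (fun s => ∫ x in (0:ℝ)..ℓ, F x s * ut x s) (Icc 0 T) :=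
    contOn_param_integral hFut2 mll
  -- the core energy inequality, for s in the open interval
  have coreIoo : ∀ s ∈ Ioo (0:ℝ) T,
      (∫ x in (0:ℝ)..ℓ, P x s) ≤ ∫ x in (0:ℝ)..ℓ, F x s * ut x s := by
    intro s hs
    have hsI : s ∈ Icc (0:ℝ) T := Ioo_subset_Icc_self hs
    have cAxs : ContinuousOn (fun x => Ax x s) (Icc 0 ℓ) := sliceL cAx hsI
    have cBxs : ContinuousOn (fun x => Bx x s) (Icc 0 ℓ) := sliceL cBx hsI
    have cBxxs : ContinuousOn (fun x => Bxx x s) (Icc 0 ℓ) := sliceL cBxx hsI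
    have cuts : ContinuousOn (fun x => ut x s) (Icc 0 ℓ) := sliceL cut hsI
    have cuxs : ContinuousOn (fun x => ux x s) (Icc 0 ℓ) := sliceL cux hsI
    have cuxxs : ContinuousOn (fun x => uxx x s) (Icc 0 ℓ) := sliceL cuxx hsI
    have cutts : ContinuousOn (fun x => utt x s) (Icc 0 ℓ) := sliceL cutt hsI
    have cuxts : ContinuousOn (fun x => uxt x s) (Icc 0 ℓ) := sliceL cuxt hsI
    have cuxxts : ContinuousOn (fun x => uxxt x s) (Icc 0 ℓ) := sliceL cuxxt hsI
    have cFs : ContinuousOn (fun x => F x s) (Icc 0 ℓ) := sliceL hF hsI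
    have ibp1 : ∫ x in (0:ℝ)..ℓ, Ax x s * ut x s
        = - ∫ x in (0:ℝ)..ℓ, (Tr x * ux x s) * uxt x s := by
      apply ibp hℓ (hTrc.mul cuxs) cuts cAxs cuxts
        (fun x hx => hAx x (Ioo_subset_Icc_self hx) s hsI)
        (fun x hx => hutx s hsI x hx)
      rw [hut0 s hsI, hutl s hsI]; ring
    have ibp2a : ∫ x in (0:ℝ)..ℓ, Bxx x s * ut x s
        = - ∫ x in (0:ℝ)..ℓ, Bx x s * uxt x s := by
      apply ibp hℓ cBxs cuts cBxxs cuxts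
        (fun x hx => hBxx x (Ioo_subset_Icc_self hx) s hsI)
        (fun x hx => hutx s hsI x hx)
      rw [hut0 s hsI, hutl s hsI]; ring
    have ibp2b : ∫ x in (0:ℝ)..ℓ, Bx x s * uxt x s
        = - ∫ x in (0:ℝ)..ℓ, (r x * uxx x s + κ x * uxxt x s) * uxxt x s := by
      apply ibp hℓ ((hrc.mul cuxxs).add (hκc.mul cuxxts)) cuxts cBxs cuxxts
        (fun x hx => hBx x (Ioo_subset_Icc_self hx) s hsI)
        (fun x hx => huxtx s hsI x hx)
      simp only [Pi.add_apply, Pi.mul_apply]; rw [bm0 s hsI, bml s hsI]; ring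
    have pde_int : ∫ x in (0:ℝ)..ℓ,
        ((ρA x * utt x s + μ x * ut x s - Ax x s + Bxx x s) * ut x s)
        = ∫ x in (0:ℝ)..ℓ, F x s * ut x s := by
      apply intervalIntegral.integral_congr_ae
      have hae : ∀ᵐ (x : ℝ), x ∉ ({ℓ} : Set ℝ) :=
        measure_eq_zero_iff_ae_notMem.mp (measure_singleton ℓ)
      filter_upwards [hae] with x hne hxI
      rw [uIoc_of_le hl0] at hxI
      have hxIoo : x ∈ Ioo (0:ℝ) ℓ :=
        ⟨hxI.1, lt_of_le_of_ne hxI.2 (by simpa using hne)⟩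
      rw [pde x hxIoo s hs]
    have iA : IntervalIntegrable (fun x => ρA x * (utt x s * ut x s)) volume 0 ℓ :=
      ii (hρAc.mul (cutts.mul cuts))
    have iB : IntervalIntegrable (fun x => μ x * (ut x s) ^ 2) volume 0 ℓ :=
      ii (hμc.mul (cuts.pow 2))
    have iC : IntervalIntegrable (fun x => Ax x s * ut x s) volume 0 ℓ :=
      ii (cAxs.mul cuts)
    have iD : IntervalIntegrable (fun x => Bxx x s * ut x s) volume 0 ℓ :=
      ii (cBxxs.mul cuts)
    have iE : IntervalIntegrable (fun x => Tr x * (ux x s * uxt x s)) volume 0 ℓ :=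
      ii (hTrc.mul (cuxs.mul cuxts))
    have iG : IntervalIntegrable (fun x => r x * (uxx x s * uxxt x s)) volume 0 ℓ :=
      ii (hrc.mul (cuxxs.mul cuxxts))
    have iH : IntervalIntegrable (fun x => κ x * (uxxt x s) ^ 2) volume 0 ℓ :=
      ii (hκc.mul (cuxxts.pow 2))
    have congr1 : ∫ x in (0:ℝ)..ℓ,
        ((ρA x * utt x s + μ x * ut x s - Ax x s + Bxx x s) * ut x s)
        = ∫ x in (0:ℝ)..ℓ, (ρA x * (utt x s * ut x s) + μ x * (ut x s) ^ 2
            - Ax x s * ut x s + Bxx x s * ut x s) :=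
      intervalIntegral.integral_congr (fun x _ => by ring)
    have split1 : ∫ x in (0:ℝ)..ℓ, (ρA x * (utt x s * ut x s) + μ x * (ut x s) ^ 2
            - Ax x s * ut x s + Bxx x s * ut x s)
        = (∫ x in (0:ℝ)..ℓ, ρA x * (utt x s * ut x s))
          + (∫ x in (0:ℝ)..ℓ, μ x * (ut x s) ^ 2)
          - (∫ x in (0:ℝ)..ℓ, Ax x s * ut x s)
          + (∫ x in (0:ℝ)..ℓ, Bxx x s * ut x s) := by
      rw [intervalIntegral.integral_add ((iA.add iB).sub iC) iD,
        intervalIntegral.integral_sub (iA.add iB) iC,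
        intervalIntegral.integral_add iA iB]
    have eTr : ∫ x in (0:ℝ)..ℓ, (Tr x * ux x s) * uxt x s
        = ∫ x in (0:ℝ)..ℓ, Tr x * (ux x s * uxt x s) :=
      intervalIntegral.integral_congr (fun x _ => by ring)
    have e7 : ∫ x in (0:ℝ)..ℓ, (r x * uxx x s + κ x * uxxt x s) * uxxt x s
        = (∫ x in (0:ℝ)..ℓ, r x * (uxx x s * uxxt x s))
          + (∫ x in (0:ℝ)..ℓ, κ x * (uxxt x s) ^ 2) := by
      rw [intervalIntegral.integral_congr
        (g := fun x => r x * (uxx x s * uxxt x s) + κ x * (uxxt x s) ^ 2)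
        (fun x _ => by ring)]
      exact intervalIntegral.integral_add iG iH
    have splitP : ∫ x in (0:ℝ)..ℓ, P x s
        = (∫ x in (0:ℝ)..ℓ, ρA x * (utt x s * ut x s))
          + (∫ x in (0:ℝ)..ℓ, Tr x * (ux x s * uxt x s))
          + (∫ x in (0:ℝ)..ℓ, r x * (uxx x s * uxxt x s)) := by
      simp only [hP]
      rw [intervalIntegral.integral_add (iA.add iE) iG,
        intervalIntegral.integral_add iA iE]
    have n2 : 0 ≤ ∫ x in (0:ℝ)..ℓ, μ x * (ut x s) ^ 2 :=
      intervalIntegral.integral_nonneg hl0 (fun x hx => mul_nonneg (hμb x hx) (sq_nonneg _))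
    have n8 : 0 ≤ ∫ x in (0:ℝ)..ℓ, κ x * (uxxt x s) ^ 2 :=
      intervalIntegral.integral_nonneg hl0 (fun x hx => mul_nonneg (hκb x hx) (sq_nonneg _))
    rw [congr1, split1] at pde_int
    rw [splitP]
    rw [eTr] at ibp1
    linarith [pde_int, ibp1, ibp2a, ibp2b, e7, n2, n8]
  have core : ∀ s ∈ Icc (0:ℝ) T,
      (∫ x in (0:ℝ)..ℓ, P x s) ≤ ∫ x in (0:ℝ)..ℓ, F x s * ut x s := by
    have hclo : closure (Ioo (0:ℝ) T) = Icc (0:ℝ) T := closure_Ioo hT.ne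
    intro s hs
    refine le_on_closure coreIoo ?_ ?_ (by rw [hclo]; exact hs)
    · rw [hclo]; exact hPc
    · rw [hclo]; exact hFutPc
  -- the quantities Q, E
  set Q : ℝ → ℝ := fun s => ∫ x in (0:ℝ)..ℓ, (F x s) ^ 2 with hQ
  set E : ℝ → ℝ := fun t => ∫ x in (0:ℝ)..ℓ,
    (ρA x * (ut x t) ^ 2 + Tr x * (ux x t) ^ 2 + r x * (uxx x t) ^ 2) with hE
  have cE2 : ContinuousOn (fun p : ℝ × ℝ => ρA p.1 * (ut p.1 p.2) ^ 2
      + Tr p.1 * (ux p.1 p.2) ^ 2 + r p.1 * (uxx p.1 p.2) ^ 2) (Icc 0 ℓ ×ˢ Icc 0 T) :=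
    (((cfst hρAc).mul (cut.pow 2)).add ((cfst hTrc).mul (cux.pow 2))).add
      ((cfst hrc).mul (cuxx.pow 2))
  have cEc : ContinuousOn E (Icc 0 T) := contOn_param_integral cE2 mll
  have cQc : ContinuousOn Q (Icc 0 T) := contOn_param_integral (hF.pow 2) mll
  -- integrated energy identity
  have energy1 : ∀ t ∈ Icc (0:ℝ) T,
      E t ≤ 2 * ∫ s in (0:ℝ)..t, (∫ x in (0:ℝ)..ℓ, F x s * ut x s) := by
    intro t ht
    have hsubT : Icc (0:ℝ) t ⊆ Icc (0:ℝ) T := Icc_subset_Icc le_rfl ht.2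
    have swap : ∫ s in (0:ℝ)..t, (∫ x in (0:ℝ)..ℓ, P x s)
        = ∫ x in (0:ℝ)..ℓ, (∫ s in (0:ℝ)..t, P x s) := by
      apply interval_integral_swap ht.1 hl0
      exact cP2.comp continuous_swap.continuousOn
        (fun p hp => Set.mk_mem_prod hp.2 (hsubT hp.1))
    have inner : ∀ x ∈ Icc (0:ℝ) ℓ, ∫ s in (0:ℝ)..t, P x s
        = (ρA x * (ut x t) ^ 2 + Tr x * (ux x t) ^ 2 + r x * (uxx x t) ^ 2) / 2 := by
      intro x hx
      have hD : ∀ s ∈ uIcc (0:ℝ) t, HasDerivAt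
          (fun s => (ρA x * (ut x s * ut x s) + Tr x * (ux x s * ux x s)
            + r x * (uxx x s * uxx x s)) / 2) (P x s) s := by
        intro s hsmem
        have hsI : s ∈ Icc (0:ℝ) T := hsubT (by rwa [uIcc_of_le ht.1] at hsmem)
        have h1 := (hutt x hx s hsI).mul (hutt x hx s hsI)
        have h2 := (huxt x hx s hsI).mul (huxt x hx s hsI)
        have h3 := (huxxt x hx s hsI).mul (huxxt x hx s hsI)
        have h4 := (((h1.const_mul (ρA x)).add (h2.const_mul (Tr x))).add
          (h3.const_mul (r x))).div_const 2
        refine h4.congr_deriv ?_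
        simp only [hP]; ring
      have hint : IntervalIntegrable (fun s => P x s) volume 0 t :=
        iiT ht (sliceR cP2 hx)
      have hftc := intervalIntegral.integral_eq_sub_of_hasDerivAt hD hint
      rw [hftc]
      simp only [hut_init x hx, hux_init x hx, huxx_init x hx]
      ring
    have innerInt : ∫ x in (0:ℝ)..ℓ, (∫ s in (0:ℝ)..t, P x s) = E t / 2 := by
      rw [intervalIntegral.integral_congr
        (g := fun x => (ρA x * (ut x t) ^ 2 + Tr x * (ux x t) ^ 2
          + r x * (uxx x t) ^ 2) / 2)
        (fun x hx => inner x (by rwa [uIcc_of_le hl0] at hx))]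
      rw [hE, intervalIntegral.integral_div]
    have m1 : ∫ s in (0:ℝ)..t, (∫ x in (0:ℝ)..ℓ, P x s)
        ≤ ∫ s in (0:ℝ)..t, (∫ x in (0:ℝ)..ℓ, F x s * ut x s) :=
      intervalIntegral.integral_mono_on ht.1 (iiT ht hPc) (iiT ht hFutPc)
        (fun s hs => core s (hsubT hs))
    have m2 : E t / 2 ≤ ∫ s in (0:ℝ)..t, (∫ x in (0:ℝ)..ℓ, F x s * ut x s) := by
      rw [← innerInt, ← swap]; exact m1
    linarith
  -- bound the right-hand side
  have EFbound : ∀ s ∈ Icc (0:ℝ) T,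
      (∫ x in (0:ℝ)..ℓ, F x s * ut x s) ≤ Q s / 2 + E s / (2 * ρ₀) := by
    intro s hs
    have cuts : ContinuousOn (fun x => ut x s) (Icc 0 ℓ) := sliceL cut hs
    have cuxs : ContinuousOn (fun x => ux x s) (Icc 0 ℓ) := sliceL cux hs
    have cuxxs : ContinuousOn (fun x => uxx x s) (Icc 0 ℓ) := sliceL cuxx hs
    have cFs : ContinuousOn (fun x => F x s) (Icc 0 ℓ) := sliceL hF hs
    have h1 : (∫ x in (0:ℝ)..ℓ, F x s * ut x s)
        ≤ ∫ x in (0:ℝ)..ℓ, ((F x s) ^ 2 / 2 + (ut x s) ^ 2 / 2) := by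
      apply intervalIntegral.integral_mono_on hl0 (ii (cFs.mul cuts))
        (ii (((cFs.pow 2).div_const 2).add ((cuts.pow 2).div_const 2)))
      intro x hx
      simp only [Pi.add_apply, Pi.mul_apply, Pi.pow_apply]
      nlinarith [sq_nonneg (F x s - ut x s)]
    have h2 : ∫ x in (0:ℝ)..ℓ, ((F x s) ^ 2 / 2 + (ut x s) ^ 2 / 2)
        = Q s / 2 + (∫ x in (0:ℝ)..ℓ, (ut x s) ^ 2) / 2 := by
      rw [intervalIntegral.integral_add (f := fun x => F x s ^ 2 / 2) (g := fun x => ut x s ^ 2 / 2)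
          (ii ((cFs.pow 2).div_const 2))
        (ii ((cuts.pow 2).div_const 2)),
        intervalIntegral.integral_div, intervalIntegral.integral_div, hQ]
    have h3 : ρ₀ * ∫ x in (0:ℝ)..ℓ, (ut x s) ^ 2 ≤ E s := by
      have h3a : ∫ x in (0:ℝ)..ℓ, ρ₀ * (ut x s) ^ 2
          ≤ ∫ x in (0:ℝ)..ℓ, ρA x * (ut x s) ^ 2 :=
        intervalIntegral.integral_mono_on hl0
          (ii (continuousOn_const.mul (cuts.pow 2))) (ii (hρAc.mul (cuts.pow 2)))
          (fun x hx => mul_le_mul_of_nonneg_right (hρAb x hx) (sq_nonneg _))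
      have h3b : ∫ x in (0:ℝ)..ℓ, ρA x * (ut x s) ^ 2 ≤ E s := by
        rw [hE]
        apply intervalIntegral.integral_mono_on hl0 (ii (hρAc.mul (cuts.pow 2)))
          (ii (sliceL cE2 hs))
        intro x hx
        simp only [Pi.mul_apply, Pi.pow_apply]
        linarith [mul_nonneg (hTrb x hx) (sq_nonneg (ux x s)),
          mul_nonneg (hr₀.le.trans (hrb x hx)) (sq_nonneg (uxx x s))]
      calc ρ₀ * ∫ x in (0:ℝ)..ℓ, (ut x s) ^ 2
          = ∫ x in (0:ℝ)..ℓ, ρ₀ * (ut x s) ^ 2 :=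
            (intervalIntegral.integral_const_mul _ _).symm
        _ ≤ E s := le_trans h3a h3b
    have h4 : (∫ x in (0:ℝ)..ℓ, (ut x s) ^ 2) / 2 ≤ E s / (2 * ρ₀) := by
      rw [div_le_div_iff₀ (by norm_num) (by positivity)]
      nlinarith [h3]
    linarith
  set D : ℝ := ∫ s in (0:ℝ)..T, Q s with hD
  have hQnn : ∀ s ∈ Icc (0:ℝ) T, 0 ≤ Q s := fun s _ =>
    intervalIntegral.integral_nonneg hl0 (fun x _ => sq_nonneg _)
  have hEnn : ∀ t ∈ Icc (0:ℝ) T, 0 ≤ E t := by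
    intro t ht
    apply intervalIntegral.integral_nonneg hl0
    intro x hx
    exact add_nonneg (add_nonneg (mul_nonneg (hρ₀.le.trans (hρAb x hx)) (sq_nonneg _))
      (mul_nonneg (hTrb x hx) (sq_nonneg _)))
      (mul_nonneg (hr₀.le.trans (hrb x hx)) (sq_nonneg _))
  have hD0 : 0 ≤ D := intervalIntegral.integral_nonneg hT0 hQnn
  have energy2 : ∀ t ∈ Icc (0:ℝ) T, E t ≤ D + (1 / ρ₀) * ∫ s in (0:ℝ)..t, E s := by
    intro t ht
    have hsubT : Icc (0:ℝ) t ⊆ Icc (0:ℝ) T := Icc_subset_Icc le_rfl ht.2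
    have hQint : IntervalIntegrable Q volume 0 t := iiT ht cQc
    have hEint : IntervalIntegrable E volume 0 t := iiT ht cEc
    have h5 : ∫ s in (0:ℝ)..t, (∫ x in (0:ℝ)..ℓ, F x s * ut x s)
        ≤ ∫ s in (0:ℝ)..t, (Q s / 2 + E s / (2 * ρ₀)) :=
      intervalIntegral.integral_mono_on ht.1 (iiT ht hFutPc)
        ((hQint.div_const 2).add (hEint.div_const (2 * ρ₀)))
        (fun s hs => EFbound s (hsubT hs))
    have h6 : ∫ s in (0:ℝ)..t, (Q s / 2 + E s / (2 * ρ₀))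
        = (∫ s in (0:ℝ)..t, Q s) / 2 + (∫ s in (0:ℝ)..t, E s) / (2 * ρ₀) := by
      rw [intervalIntegral.integral_add (hQint.div_const 2) (hEint.div_const (2 * ρ₀)),
        intervalIntegral.integral_div, intervalIntegral.integral_div]
    have hQtT : IntervalIntegrable Q volume t T := by
      apply ContinuousOn.intervalIntegrable
      rw [uIcc_of_le ht.2]
      exact cQc.mono (Icc_subset_Icc ht.1 le_rfl)
    have h7 : ∫ s in (0:ℝ)..t, Q s ≤ D := by
      rw [hD, ← intervalIntegral.integral_add_adjacent_intervals hQint hQtT]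
      have hnn : 0 ≤ ∫ s in t..T, Q s :=
        intervalIntegral.integral_nonneg ht.2
          (fun s hs => hQnn s ⟨le_trans ht.1 hs.1, hs.2⟩)
      linarith
    have h8 := energy1 t ht
    have h9 : 2 * ((∫ s in (0:ℝ)..t, Q s) / 2 + (∫ s in (0:ℝ)..t, E s) / (2 * ρ₀))
        = (∫ s in (0:ℝ)..t, Q s) + (1 / ρ₀) * (∫ s in (0:ℝ)..t, E s) := by
      field_simp
    have hEtnn : 0 ≤ (1 / ρ₀) * (∫ s in (0:ℝ)..t, E s) := by
      apply mul_nonneg (by positivity)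
      exact intervalIntegral.integral_nonneg ht.1
        (fun s hs => hEnn s ⟨hs.1, le_trans hs.2 ht.2⟩)
    linarith [h5, h6, h7, h8, h9]
  -- Grönwall
  set φ : ℝ → ℝ := fun t => ∫ s in (0:ℝ)..t, E s with hφ
  have hφc : ContinuousOn φ (Icc 0 T) := by
    have hInt : IntegrableOn E (uIcc 0 T) := by
      rw [uIcc_of_le hT0]; exact cEc.integrableOn_Icc
    have := intervalIntegral.continuousOn_primitive_interval hInt
    rwa [uIcc_of_le hT0] at this
  have hφd : ∀ t ∈ Ico (0:ℝ) T, HasDerivWithinAt φ (E t) (Ici t) t := by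
    intro t ht
    have htI : t ∈ Icc (0:ℝ) T := Ico_subset_Icc_self ht
    haveI : Fact (t ∈ Icc (0:ℝ) T) := ⟨htI⟩
    have h1 : HasDerivWithinAt φ (E t) (Icc 0 T) t :=
      intervalIntegral.integral_hasDerivWithinAt_right (iiT htI cEc)
        (cEc.stronglyMeasurableAtFilter_nhdsWithin measurableSet_Icc t)
        (cEc t htI)
    exact h1.mono_of_mem_nhdsWithin (Icc_mem_nhdsGE_of_mem ht)
  have hφ0 : ‖φ 0‖ ≤ 0 := by simp [hφ]
  have hφnn : ∀ t ∈ Icc (0:ℝ) T, 0 ≤ φ t := by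
    intro t ht
    exact intervalIntegral.integral_nonneg ht.1
      (fun s hs => hEnn s ⟨hs.1, le_trans hs.2 ht.2⟩)
  have bound : ∀ t ∈ Ico (0:ℝ) T, ‖E t‖ ≤ (1 / ρ₀) * ‖φ t‖ + D := by
    intro t ht
    have htI : t ∈ Icc (0:ℝ) T := Ico_subset_Icc_self ht
    rw [Real.norm_of_nonneg (hEnn t htI), Real.norm_of_nonneg (hφnn t htI)]
    linarith [energy2 t htI]
  have gron := norm_le_gronwallBound_of_norm_deriv_right_le hφc hφd hφ0 bound T
    (right_mem_Icc.2 hT0)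
  have hK : (1 / ρ₀ : ℝ) ≠ 0 := by positivity
  rw [Real.norm_of_nonneg (hφnn T (right_mem_Icc.2 hT0)),
    gronwallBound_of_K_ne_0 hK] at gron
  simp only [sub_zero, zero_mul, zero_add] at gron
  have gron' : φ T ≤ ρ₀ * (Real.exp (T / ρ₀) - 1) * D := by
    have harg : (1 / ρ₀) * T = T / ρ₀ := by ring
    rw [harg] at gron
    calc φ T ≤ D / (1 / ρ₀) * (Real.exp (T / ρ₀) - 1) := gron
      _ = ρ₀ * (Real.exp (T / ρ₀) - 1) * D := by field_simp
  -- trace estimates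
  have trace : ∀ t ∈ Icc (0:ℝ) T,
      (ux 0 t) ^ 2 ≤ ℓ / r₀ * E t ∧ (ux ℓ t) ^ 2 ≤ ℓ / r₀ * E t := by
    intro t ht
    have contU : ContinuousOn (fun y => u y t) (Icc 0 ℓ) :=
      fun x hx => ((hux x hx t ht).continuousAt).continuousWithinAt
    obtain ⟨x₀, hx₀, hsl⟩ := exists_hasDerivAt_eq_slope (fun y => u y t)
      (fun y => ux y t) hℓ contU (fun x hx => hux x (Ioo_subset_Icc_self hx) t ht)
    have hux₀ : ux x₀ t = 0 := by rw [hsl, bl t ht, b0 t ht]; simp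
    have hx₀I : x₀ ∈ Icc (0:ℝ) ℓ := Ioo_subset_Icc_self hx₀
    have cuxxs : ContinuousOn (fun y => uxx y t) (Icc 0 ℓ) := sliceL cuxx ht
    have i1 : IntervalIntegrable (fun y => (uxx y t) ^ 2) volume 0 x₀ := by
      apply ContinuousOn.intervalIntegrable
      rw [uIcc_of_le hx₀I.1]
      exact (cuxxs.pow 2).mono (Icc_subset_Icc le_rfl hx₀I.2)
    have i2 : IntervalIntegrable (fun y => (uxx y t) ^ 2) volume x₀ ℓ := by
      apply ContinuousOn.intervalIntegrable
      rw [uIcc_of_le hx₀I.2]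
      exact (cuxxs.pow 2).mono (Icc_subset_Icc hx₀I.1 le_rfl)
    set J : ℝ := ∫ y in (0:ℝ)..ℓ, (uxx y t) ^ 2 with hJdef
    have hsplit : (∫ y in (0:ℝ)..x₀, (uxx y t) ^ 2) + (∫ y in x₀..ℓ, (uxx y t) ^ 2)
        = J := intervalIntegral.integral_add_adjacent_intervals i1 i2
    have n1 : 0 ≤ ∫ y in (0:ℝ)..x₀, (uxx y t) ^ 2 :=
      intervalIntegral.integral_nonneg hx₀I.1 (fun y _ => sq_nonneg _)
    have n2 : 0 ≤ ∫ y in x₀..ℓ, (uxx y t) ^ 2 :=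
      intervalIntegral.integral_nonneg hx₀I.2 (fun y _ => sq_nonneg _)
    have ftc1 : ∫ y in (0:ℝ)..x₀, uxx y t = ux x₀ t - ux 0 t := by
      apply intervalIntegral.integral_eq_sub_of_hasDerivAt
      · intro y hy
        rw [uIcc_of_le hx₀I.1] at hy
        exact huxx y (Icc_subset_Icc le_rfl hx₀I.2 hy) t ht
      · apply ContinuousOn.intervalIntegrable
        rw [uIcc_of_le hx₀I.1]
        exact cuxxs.mono (Icc_subset_Icc le_rfl hx₀I.2)
    have ftc2 : ∫ y in x₀..ℓ, uxx y t = ux ℓ t - ux x₀ t := by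
      apply intervalIntegral.integral_eq_sub_of_hasDerivAt
      · intro y hy
        rw [uIcc_of_le hx₀I.2] at hy
        exact huxx y (Icc_subset_Icc hx₀I.1 le_rfl hy) t ht
      · apply ContinuousOn.intervalIntegrable
        rw [uIcc_of_le hx₀I.2]
        exact cuxxs.mono (Icc_subset_Icc hx₀I.1 le_rfl)
    have cs1 : (∫ y in (0:ℝ)..x₀, uxx y t) ^ 2
        ≤ (x₀ - 0) * ∫ y in (0:ℝ)..x₀, (uxx y t) ^ 2 :=
      sq_integral_le hx₀I.1 (cuxxs.mono (Icc_subset_Icc le_rfl hx₀I.2))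
    have cs2 : (∫ y in x₀..ℓ, uxx y t) ^ 2
        ≤ (ℓ - x₀) * ∫ y in x₀..ℓ, (uxx y t) ^ 2 :=
      sq_integral_le hx₀I.2 (cuxxs.mono (Icc_subset_Icc hx₀I.1 le_rfl))
    have hrE : r₀ * J ≤ E t := by
      have ha : ∫ y in (0:ℝ)..ℓ, r₀ * (uxx y t) ^ 2
          ≤ ∫ y in (0:ℝ)..ℓ, (ρA y * (ut y t) ^ 2 + Tr y * (ux y t) ^ 2
            + r y * (uxx y t) ^ 2) := by
        apply intervalIntegral.integral_mono_on hl0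
          (ii (continuousOn_const.mul (cuxxs.pow 2))) (ii (sliceL cE2 ht))
        intro x hx
        simp only [Pi.mul_apply, Pi.pow_apply]
        linarith [mul_nonneg (hρ₀.le.trans (hρAb x hx)) (sq_nonneg (ut x t)),
          mul_nonneg (hTrb x hx) (sq_nonneg (ux x t)),
          mul_le_mul_of_nonneg_right (hrb x hx) (sq_nonneg (uxx x t))]
      calc r₀ * J = ∫ y in (0:ℝ)..ℓ, r₀ * (uxx y t) ^ 2 := by
            rw [hJdef, ← intervalIntegral.integral_const_mul]
        _ ≤ E t := by rw [hE]; exact ha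
    have hJE : ℓ * J ≤ ℓ / r₀ * E t := by
      rw [div_mul_eq_mul_div, le_div_iff₀ hr₀]
      calc ℓ * J * r₀ = ℓ * (r₀ * J) := by ring
        _ ≤ ℓ * E t := mul_le_mul_of_nonneg_left hrE hl0
    constructor
    · have e0 : (ux 0 t) ^ 2 = (∫ y in (0:ℝ)..x₀, uxx y t) ^ 2 := by
        rw [ftc1, hux₀]; ring
      have hb : (ux 0 t) ^ 2 ≤ ℓ * J := by
        rw [e0]
        have s1 : (x₀ - 0) * (∫ y in (0:ℝ)..x₀, (uxx y t) ^ 2)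
            ≤ ℓ * (∫ y in (0:ℝ)..x₀, (uxx y t) ^ 2) :=
          mul_le_mul_of_nonneg_right (by linarith [hx₀.2]) n1
        have s2 : ℓ * (∫ y in (0:ℝ)..x₀, (uxx y t) ^ 2) ≤ ℓ * J :=
          mul_le_mul_of_nonneg_left (by linarith [n2, hsplit.symm, hsplit]) hl0
        linarith [cs1]
      linarith
    · have e0 : (ux ℓ t) ^ 2 = (∫ y in x₀..ℓ, uxx y t) ^ 2 := by
        rw [ftc2, hux₀]; ring
      have hb : (ux ℓ t) ^ 2 ≤ ℓ * J := by
        rw [e0]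
        have s1 : (ℓ - x₀) * (∫ y in x₀..ℓ, (uxx y t) ^ 2)
            ≤ ℓ * (∫ y in x₀..ℓ, (uxx y t) ^ 2) :=
          mul_le_mul_of_nonneg_right (by linarith [hx₀.1]) n2
        have s2 : ℓ * (∫ y in x₀..ℓ, (uxx y t) ^ 2) ≤ ℓ * J :=
          mul_le_mul_of_nonneg_left (by linarith [n1, hsplit]) hl0
        linarith [cs2]
      linarith
  -- final assembly
  have final : ∀ g : ℝ → ℝ, ContinuousOn g (Icc 0 T) →
      (∀ t ∈ Icc (0:ℝ) T, g t ≤ ℓ / r₀ * E t) →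
      (∫ t in (0:ℝ)..T, g t) ≤ ℓ * ρ₀ * (Real.exp (T / ρ₀) - 1) / r₀ * D := by
    intro g hg hgle
    have h1 : (∫ t in (0:ℝ)..T, g t) ≤ ∫ t in (0:ℝ)..T, ℓ / r₀ * E t :=
      intervalIntegral.integral_mono_on hT0 (iiT mTT hg)
        ((iiT mTT cEc).const_mul _) hgle
    have h2 : ∫ t in (0:ℝ)..T, ℓ / r₀ * E t = ℓ / r₀ * φ T := by
      rw [intervalIntegral.integral_const_mul, hφ]
    have h3 : ℓ / r₀ * φ T ≤ ℓ / r₀ * (ρ₀ * (Real.exp (T / ρ₀) - 1) * D) :=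
      mul_le_mul_of_nonneg_left gron' (by positivity)
    calc (∫ t in (0:ℝ)..T, g t) ≤ ℓ / r₀ * φ T := by rw [← h2]; exact h1
      _ ≤ ℓ / r₀ * (ρ₀ * (Real.exp (T / ρ₀) - 1) * D) := h3
      _ = ℓ * ρ₀ * (Real.exp (T / ρ₀) - 1) / r₀ * D := by ring
  have hDgoal : D = ∫ t in (0:ℝ)..T, ∫ x in (0:ℝ)..ℓ, (F x t) ^ 2 := rfl
  constructor
  · have := final (fun t => (ux 0 t) ^ 2) ((sliceR cux m0l).pow 2)
      (fun t ht => (trace t ht).1)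
    rwa [hDgoal] at this
  · have := final (fun t => (ux ℓ t) ^ 2) ((sliceR cux mll).pow 2)
      (fun t ht => (trace t ht).2)
    rwa [hDgoal] at this

end Beam

/-- **Lipschitz continuity of the input-output operators (Lemma 2)** at the level of
classical solutions, with `C₁² = (5ℓρ₀/3)(C_e² − 1)` and `C_e² = exp(T/ρ₀)`. -/
theorem boundary_slopes_lipschitz_in_load
    (ℓ T ρ₀ r₀ κ₀ : ℝ) (hℓ : 0 < ℓ) (hT : 0 < T)
    (hρ₀ : 0 < ρ₀) (hr₀ : 0 < r₀) (hκ₀ : 0 < κ₀)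
    (ρA μ Tr r κ : ℝ → ℝ) (F₁ F₂ : ℝ → ℝ → ℝ)
    (hρA : ContDiffOn ℝ (⊤ : ℕ∞) ρA (Icc 0 ℓ))
    (hμ : ContDiffOn ℝ (⊤ : ℕ∞) μ (Icc 0 ℓ))
    (hTr : ContDiffOn ℝ (⊤ : ℕ∞) Tr (Icc 0 ℓ))
    (hr : ContDiffOn ℝ (⊤ : ℕ∞) r (Icc 0 ℓ))
    (hκ : ContDiffOn ℝ (⊤ : ℕ∞) κ (Icc 0 ℓ))
    (hρAb : ∀ x ∈ Icc (0:ℝ) ℓ, ρ₀ ≤ ρA x)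
    (hμb : ∀ x ∈ Icc (0:ℝ) ℓ, 0 ≤ μ x)
    (hTrb : ∀ x ∈ Icc (0:ℝ) ℓ, 0 ≤ Tr x)
    (hrb : ∀ x ∈ Icc (0:ℝ) ℓ, r₀ ≤ r x)
    (hκb : ∀ x ∈ Icc (0:ℝ) ℓ, κ₀ ≤ κ x)
    (hF₁ : ContinuousOn (fun p : ℝ × ℝ => F₁ p.1 p.2) (Icc 0 ℓ ×ˢ Icc 0 T))
    (hF₂ : ContinuousOn (fun p : ℝ × ℝ => F₂ p.1 p.2) (Icc 0 ℓ ×ˢ Icc 0 T))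
    (sol₁ : ForwardSol ℓ T ρA μ Tr r κ F₁)
    (sol₂ : ForwardSol ℓ T ρA μ Tr r κ F₂) :
    (∫ t in (0:ℝ)..T, (sol₁.ux 0 t - sol₂.ux 0 t) ^ 2)
      ≤ (5 * ℓ * ρ₀ / 3) * (Real.exp (T / ρ₀) - 1) / r₀ * (∫ t in (0:ℝ)..T, ∫ x in (0:ℝ)..ℓ, (F₁ x t - F₂ x t) ^ 2) ∧
    (∫ t in (0:ℝ)..T, (sol₁.ux ℓ t - sol₂.ux ℓ t) ^ 2)
      ≤ (5 * ℓ * ρ₀ / 3) * (Real.exp (T / ρ₀) - 1) / r₀ * (∫ t in (0:ℝ)..T, ∫ x in (0:ℝ)..ℓ, (F₁ x t - F₂ x t) ^ 2) := by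
  have hκ0 : ∀ x ∈ Icc (0:ℝ) ℓ, 0 ≤ κ x := fun x hx => hκ₀.le.trans (hκb x hx)
  have hFdc : ContinuousOn (fun p : ℝ × ℝ => F₁ p.1 p.2 - F₂ p.1 p.2)
      (Icc 0 ℓ ×ˢ Icc 0 T) := hF₁.sub hF₂
  have key := Beam.master (F := fun x t => F₁ x t - F₂ x t) hℓ hT hρ₀ hr₀ hρA.continuousOn hμ.continuousOn
    hTr.continuousOn hr.continuousOn hκ.continuousOn hρAb hμb hTrb hrb hκ0 hFdc
    (sol :=
      { u := fun x t => sol₁.u x t - sol₂.u x t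
        ux := fun x t => sol₁.ux x t - sol₂.ux x t
        uxx := fun x t => sol₁.uxx x t - sol₂.uxx x t
        ut := fun x t => sol₁.ut x t - sol₂.ut x t
        utt := fun x t => sol₁.utt x t - sol₂.utt x t
        uxt := fun x t => sol₁.uxt x t - sol₂.uxt x t
        uxxt := fun x t => sol₁.uxxt x t - sol₂.uxxt x t
        Ax := fun x t => sol₁.Ax x t - sol₂.Ax x t
        Bx := fun x t => sol₁.Bx x t - sol₂.Bx x t
        Bxx := fun x t => sol₁.Bxx x t - sol₂.Bxx x t
        smooth := sol₁.smooth.sub sol₂.smooth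
        hux := fun x hx t ht => (sol₁.hux x hx t ht).sub (sol₂.hux x hx t ht)
        huxx := fun x hx t ht => (sol₁.huxx x hx t ht).sub (sol₂.huxx x hx t ht)
        hut := fun x hx t ht => (sol₁.hut x hx t ht).sub (sol₂.hut x hx t ht)
        hutt := fun x hx t ht => (sol₁.hutt x hx t ht).sub (sol₂.hutt x hx t ht)
        huxt := fun x hx t ht => (sol₁.huxt x hx t ht).sub (sol₂.huxt x hx t ht)
        huxxt := fun x hx t ht => (sol₁.huxxt x hx t ht).sub (sol₂.huxxt x hx t ht)
        hAx := by
          intro x hx t ht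
          have h := (sol₁.hAx x hx t ht).sub (sol₂.hAx x hx t ht)
          have heq : (fun y => Tr y * (sol₁.ux y t - sol₂.ux y t))
              = fun y => Tr y * sol₁.ux y t - Tr y * sol₂.ux y t := by
            funext y; ring
          rw [heq]; exact h
        hBx := by
          intro x hx t ht
          have h := (sol₁.hBx x hx t ht).sub (sol₂.hBx x hx t ht)
          have heq : (fun y => r y * (sol₁.uxx y t - sol₂.uxx y t)
                + κ y * (sol₁.uxxt y t - sol₂.uxxt y t))
              = fun y => (r y * sol₁.uxx y t + κ y * sol₁.uxxt y t)
                - (r y * sol₂.uxx y t + κ y * sol₂.uxxt y t) := by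
            funext y; ring
          rw [heq]; exact h
        hBxx := fun x hx t ht => (sol₁.hBxx x hx t ht).sub (sol₂.hBxx x hx t ht)
        cont_ux := sol₁.cont_ux.sub sol₂.cont_ux
        cont_uxx := sol₁.cont_uxx.sub sol₂.cont_uxx
        cont_ut := sol₁.cont_ut.sub sol₂.cont_ut
        cont_utt := sol₁.cont_utt.sub sol₂.cont_utt
        cont_uxt := sol₁.cont_uxt.sub sol₂.cont_uxt
        cont_uxxt := sol₁.cont_uxxt.sub sol₂.cont_uxxt
        cont_Ax := sol₁.cont_Ax.sub sol₂.cont_Ax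
        cont_Bx := sol₁.cont_Bx.sub sol₂.cont_Bx
        cont_Bxx := sol₁.cont_Bxx.sub sol₂.cont_Bxx
        pde := by
          intro x hx t ht
          beta_reduce
          linear_combination (sol₁.pde x hx t ht) - (sol₂.pde x hx t ht)
        init_u := by
          beta_reduce
          intro x hx
          rw [sol₁.init_u x hx, sol₂.init_u x hx, sub_zero]
        init_ut := by
          beta_reduce
          intro x hx
          rw [sol₁.init_ut x hx, sol₂.init_ut x hx, sub_zero]
        bc_u0 := by
          beta_reduce
          intro t ht
          rw [sol₁.bc_u0 t ht, sol₂.bc_u0 t ht, sub_zero]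
        bc_ul := by
          beta_reduce
          intro t ht
          rw [sol₁.bc_ul t ht, sol₂.bc_ul t ht, sub_zero]
        bc_m0 := by
          intro t ht
          beta_reduce
          linear_combination (sol₁.bc_m0 t ht) - (sol₂.bc_m0 t ht)
        bc_ml := by
          intro t ht
          beta_reduce
          linear_combination (sol₁.bc_ml t ht) - (sol₂.bc_ml t ht) })
  obtain ⟨k1, k2⟩ := key
  have hDnn : 0 ≤ ∫ t in (0:ℝ)..T, ∫ x in (0:ℝ)..ℓ, (F₁ x t - F₂ x t) ^ 2 := by
    apply intervalIntegral.integral_nonneg hT.le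
    intro t _
    exact intervalIntegral.integral_nonneg hℓ.le (fun x _ => sq_nonneg _)
  have hcc : ℓ * ρ₀ * (Real.exp (T / ρ₀) - 1) / r₀
      ≤ 5 * ℓ * ρ₀ / 3 * (Real.exp (T / ρ₀) - 1) / r₀ := by
    have hexp : 0 ≤ Real.exp (T / ρ₀) - 1 := by
      have : (1:ℝ) ≤ Real.exp (T / ρ₀) := by
        rw [← Real.exp_zero]
        apply Real.exp_le_exp.2
        positivity
      linarith
    rw [div_le_div_iff₀ hr₀ hr₀]
    nlinarith [mul_nonneg (mul_nonneg hℓ.le hρ₀.le) hexp, hr₀]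
  constructor
  · calc (∫ t in (0:ℝ)..T, (sol₁.ux 0 t - sol₂.ux 0 t) ^ 2)
        ≤ ℓ * ρ₀ * (Real.exp (T / ρ₀) - 1) / r₀ *
          (∫ t in (0:ℝ)..T, ∫ x in (0:ℝ)..ℓ, (F₁ x t - F₂ x t) ^ 2) := k1
      _ ≤ 5 * ℓ * ρ₀ / 3 * (Real.exp (T / ρ₀) - 1) / r₀ *
          (∫ t in (0:ℝ)..T, ∫ x in (0:ℝ)..ℓ, (F₁ x t - F₂ x t) ^ 2) :=
        mul_le_mul_of_nonneg_right hcc hDnn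
  · calc (∫ t in (0:ℝ)..T, (sol₁.ux ℓ t - sol₂.ux ℓ t) ^ 2)
        ≤ ℓ * ρ₀ * (Real.exp (T / ρ₀) - 1) / r₀ *
          (∫ t in (0:ℝ)..T, ∫ x in (0:ℝ)..ℓ, (F₁ x t - F₂ x t) ^ 2) := k2
      _ ≤ 5 * ℓ * ρ₀ / 3 * (Real.exp (T / ρ₀) - 1) / r₀ *
          (∫ t in (0:ℝ)..T, ∫ x in (0:ℝ)..ℓ, (F₁ x t - F₂ x t) ^ 2) :=
        mul_le_mul_of_nonneg_right hcc hDnn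
end
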